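/- arXiv:1007.1679 — 5 statements merged into one kernel-verified Lean document; each statement's English description precedes it below -/
import Mathlib

section
/- Let a < b be real numbers and let f_1, f_2 : [a,b] × ℝ × ℝ → ℝ be continuous with continuous partial derivatives f_{1y}, f_{1v}, f_{2y}, f_{2v} with respect to their second and third arguments. Suppose x̃ : [a,b] → ℝ is C¹ with x̃(a) = x_a and x̃(b) = x_b, that the maps t ↦ f_{1v}(t, x̃(t), x̃'(t)) and t ↦ f_{2v}(t, x̃(t), x̃'(t)) are differentiable on [a,b], that F_2[x] ≠ 0 for every C¹ function x with x(a) = x_a and x(b) = x_b, and that x̃ is a weak local extremizer of the quotient functional L[x] = F_1[x] / F_2[x] among such admissible functions: there exists δ > 0 such that L[x̃] ≤ L[x] for every admissible x with ‖x − x̃‖₁ < δ (or L[x̃] ≥ L[x] for all such x). Then, with Q = F_1[x̃] / F_2[x̃], for all t ∈ [a,b]: f_{1y}(t, x̃(t), x̃'(t)) − Q · f_{2y}(t, x̃(t), x̃'(t)) − (d/dt)[ f_{1v}(t, x̃(t), x̃'(t)) − Q · f_{2v}(t, x̃(t), x̃'(t)) ] = 0. -/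
open Set Metric intervalIntegral MeasureTheory

lemma hasDerivAt_comp_line (f fy fv : ℝ → ℝ → ℝ)
    (hy : ∀ y v, HasDerivAt (fun y' => f y' v) (fy y v) y)
    (hv : ∀ y v, HasDerivAt (fun v' => f y v') (fv y v) v)
    (hyc : Continuous fun p : ℝ × ℝ => fy p.1 p.2)
    (Y V u w ε₀ : ℝ) :
    HasDerivAt (fun ε : ℝ => f (Y + ε * u) (V + ε * w))
      (fy (Y + ε₀ * u) (V + ε₀ * w) * u + fv (Y + ε₀ * u) (V + ε₀ * w) * w) ε₀ := by
  have hline : ∀ c d s : ℝ, HasDerivAt (fun ε : ℝ => c + ε * d) d s :=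
    fun c d s => (hasDerivAt_mul_const d).const_add c
  have hG : HasDerivAt (fun ε : ℝ => f (Y + ε₀ * u) (V + ε * w))
      (fv (Y + ε₀ * u) (V + ε₀ * w) * w) ε₀ :=
    (hv (Y + ε₀ * u) (V + ε₀ * w)).comp ε₀ (hline V w ε₀)
  have hφ : ∀ e s : ℝ, HasDerivAt (fun s' : ℝ => f (Y + s' * u) (V + e * w))
      (fy (Y + s * u) (V + e * w) * u) s := by
    intro e s
    exact (hy (Y + s * u) (V + e * w)).comp s (hline Y u s)
  have hA : HasDerivAt (fun ε : ℝ => f (Y + ε * u) (V + ε * w) - f (Y + ε₀ * u) (V + ε * w))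
      (fy (Y + ε₀ * u) (V + ε₀ * w) * u) ε₀ := by
    rw [hasDerivAt_iff_tendsto_slope]
    have key : ∀ e : ℝ, e ≠ ε₀ → ∃ ξ : ℝ, |ξ - ε₀| < |e - ε₀| ∧
        slope (fun ε : ℝ => f (Y + ε * u) (V + ε * w) - f (Y + ε₀ * u) (V + ε * w)) ε₀ e
          = fy (Y + ξ * u) (V + e * w) * u := by
      intro e he
      have hcont : ∀ s1 s2 : ℝ, ContinuousOn (fun s' : ℝ => f (Y + s' * u) (V + e * w))
          (Icc s1 s2) := by
        intro s1 s2
        exact fun x _ => ((hφ e x).continuousAt).continuousWithinAt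
      have hAe : slope (fun ε : ℝ => f (Y + ε * u) (V + ε * w) - f (Y + ε₀ * u) (V + ε * w)) ε₀ e
          = (f (Y + e * u) (V + e * w) - f (Y + ε₀ * u) (V + e * w)) / (e - ε₀) := by
        rw [slope_def_field]
        rw [sub_self, sub_zero]
      rcases lt_or_gt_of_ne he with hlt | hgt
      · obtain ⟨ξ, hξ, hval⟩ := exists_hasDerivAt_eq_slope
          (fun s' : ℝ => f (Y + s' * u) (V + e * w))
          (fun s => fy (Y + s * u) (V + e * w) * u) hlt (hcont e ε₀)
          (fun x _ => hφ e x)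
        refine ⟨ξ, ?_, ?_⟩
        · rw [abs_sub_lt_iff]
          constructor <;> nlinarith [hξ.1, hξ.2, neg_abs_le (e - ε₀), le_abs_self (e - ε₀)]
        · rw [hAe, hval]
          rw [div_eq_div_iff (by linarith) (by linarith)]
          ring
      · obtain ⟨ξ, hξ, hval⟩ := exists_hasDerivAt_eq_slope
          (fun s' : ℝ => f (Y + s' * u) (V + e * w))
          (fun s => fy (Y + s * u) (V + e * w) * u) hgt (hcont ε₀ e)
          (fun x _ => hφ e x)
        refine ⟨ξ, ?_, ?_⟩
        · rw [abs_sub_lt_iff]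
          constructor <;> nlinarith [hξ.1, hξ.2, neg_abs_le (e - ε₀), le_abs_self (e - ε₀)]
        · rw [hAe, hval]
    rw [Metric.tendsto_nhdsWithin_nhds]
    intro δ hδ
    have hg : Continuous (fun q : ℝ × ℝ => (Y + q.1 * u, V + q.2 * w)) := by continuity
    have hc2 : Continuous (fun q : ℝ × ℝ => fy (Y + q.1 * u) (V + q.2 * w) * u) :=
      (hyc.comp hg).mul continuous_const
    have hc2' := hc2.continuousAt (x := ((ε₀ : ℝ), (ε₀ : ℝ)))
    rw [Metric.continuousAt_iff] at hc2'
    obtain ⟨r, hr, hball⟩ := hc2' δ hδ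
    refine ⟨r, hr, ?_⟩
    intro e he hde
    obtain ⟨ξ, hξ, hval⟩ := key e he
    rw [hval]
    have hd : dist ((ξ, e) : ℝ × ℝ) ((ε₀, ε₀) : ℝ × ℝ) < r := by
      rw [Prod.dist_eq]
      rw [Real.dist_eq] at hde ⊢
      simp only [Real.dist_eq]
      exact max_lt (lt_trans hξ hde) hde
    simpa using hball hd
  have heq : (fun ε : ℝ => f (Y + ε * u) (V + ε * w))
      = fun ε : ℝ => (f (Y + ε * u) (V + ε * w) - f (Y + ε₀ * u) (V + ε * w))
        + f (Y + ε₀ * u) (V + ε * w) := by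
    funext ε; ring
  rw [heq]
  exact hA.add hG

open Set Metric intervalIntegral MeasureTheory

section
variable {a b : ℝ}

lemma cont_comp3 {f : ℝ → ℝ → ℝ → ℝ}
    (hfc : ContinuousOn (fun p : ℝ × ℝ × ℝ => f p.1 p.2.1 p.2.2)
      (Icc a b ×ˢ (univ : Set ℝ) ×ˢ (univ : Set ℝ)))
    {X P : ℝ → ℝ} (hX : ContinuousOn X (Icc a b)) (hP : ContinuousOn P (Icc a b)) :
    ContinuousOn (fun t => f t (X t) (P t)) (Icc a b) := by
  have h1 : ContinuousOn (fun t : ℝ => ((t, X t, P t) : ℝ × ℝ × ℝ)) (Icc a b) :=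
    continuousOn_id.prodMk (hX.prodMk hP)
  exact hfc.comp h1 (fun t ht => by simp [ht])
end

section
variable {a b : ℝ}

lemma cont_fix {f : ℝ → ℝ → ℝ → ℝ}
    (hfc : ContinuousOn (fun p : ℝ × ℝ × ℝ => f p.1 p.2.1 p.2.2)
      (Icc a b ×ˢ (univ : Set ℝ) ×ˢ (univ : Set ℝ)))
    {t : ℝ} (ht : t ∈ Icc a b) :
    Continuous fun p : ℝ × ℝ => f t p.1 p.2 := by
  rw [← continuousOn_univ]
  have h1 : ContinuousOn (fun p : ℝ × ℝ => ((t, p.1, p.2) : ℝ × ℝ × ℝ)) univ :=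
    continuousOn_const.prodMk (continuousOn_fst.prodMk continuousOn_snd)
  exact hfc.comp h1 (fun p _ => by simp [ht])

lemma hasDerivAt_param_integral (hab : a < b)
    (f fy fv : ℝ → ℝ → ℝ → ℝ)
    (hfc : ContinuousOn (fun p : ℝ × ℝ × ℝ => f p.1 p.2.1 p.2.2)
      (Icc a b ×ˢ (univ : Set ℝ) ×ˢ (univ : Set ℝ)))
    (hyc : ContinuousOn (fun p : ℝ × ℝ × ℝ => fy p.1 p.2.1 p.2.2)
      (Icc a b ×ˢ (univ : Set ℝ) ×ˢ (univ : Set ℝ)))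
    (hvc : ContinuousOn (fun p : ℝ × ℝ × ℝ => fv p.1 p.2.1 p.2.2)
      (Icc a b ×ˢ (univ : Set ℝ) ×ˢ (univ : Set ℝ)))
    (hy : ∀ t ∈ Icc a b, ∀ y v, HasDerivAt (fun y' => f t y' v) (fy t y v) y)
    (hv : ∀ t ∈ Icc a b, ∀ y v, HasDerivAt (fun v' => f t y v') (fv t y v) v)
    (X P u w : ℝ → ℝ) (hX : ContinuousOn X (Icc a b)) (hP : ContinuousOn P (Icc a b))
    (hu : ContinuousOn u (Icc a b)) (hw : ContinuousOn w (Icc a b)) :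
    HasDerivAt (fun ε : ℝ => ∫ t in a..b, f t (X t + ε * u t) (P t + ε * w t))
      (∫ t in a..b, (fy t (X t) (P t) * u t + fv t (X t) (P t) * w t)) 0 := by
  have haI : a ∈ Icc a b := left_mem_Icc.mpr hab.le
  obtain ⟨M1, hM1⟩ := isCompact_Icc.exists_bound_of_continuousOn hX
  obtain ⟨M2, hM2⟩ := isCompact_Icc.exists_bound_of_continuousOn hP
  obtain ⟨M3, hM3⟩ := isCompact_Icc.exists_bound_of_continuousOn hu
  obtain ⟨M4, hM4⟩ := isCompact_Icc.exists_bound_of_continuousOn hw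
  set M : ℝ := max (max M1 M2) (max M3 M4) with hMdef
  have hM : ∀ t ∈ Icc a b, |X t| ≤ M ∧ |P t| ≤ M ∧ |u t| ≤ M ∧ |w t| ≤ M := by
    intro t ht
    have h1 := hM1 t ht; have h2 := hM2 t ht; have h3 := hM3 t ht; have h4 := hM4 t ht
    simp only [Real.norm_eq_abs] at h1 h2 h3 h4
    exact ⟨h1.trans (le_sup_of_le_left le_sup_left),
      h2.trans (le_sup_of_le_left le_sup_right),
      h3.trans (le_sup_of_le_right le_sup_left),
      h4.trans (le_sup_of_le_right le_sup_right)⟩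
  have hM0 : 0 ≤ M := le_trans (abs_nonneg (X a)) (hM a haI).1
  set R : ℝ := 2 * M + 1 with hRdef
  have hR0 : 0 < R := by positivity
  set K : Set (ℝ × ℝ × ℝ) := Icc a b ×ˢ Icc (-R) R ×ˢ Icc (-R) R with hKdef
  have hKcomp : IsCompact K := isCompact_Icc.prod (isCompact_Icc.prod isCompact_Icc)
  have hKsub : K ⊆ Icc a b ×ˢ (univ : Set ℝ) ×ˢ (univ : Set ℝ) := by
    intro p hp
    refine ⟨hp.1, trivial, trivial⟩
  obtain ⟨C1, hC1⟩ := hKcomp.exists_bound_of_continuousOn (hyc.mono hKsub)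
  obtain ⟨C2, hC2⟩ := hKcomp.exists_bound_of_continuousOn (hvc.mono hKsub)
  have hKne : ((a, 0, 0) : ℝ × ℝ × ℝ) ∈ K := by
    refine ⟨haI, ?_, ?_⟩ <;> constructor <;> simp <;> linarith
  have hC10 : 0 ≤ C1 := le_trans (norm_nonneg _) (hC1 _ hKne)
  have hC20 : 0 ≤ C2 := le_trans (norm_nonneg _) (hC2 _ hKne)
  -- membership helper
  have hmem : ∀ t ∈ Icc a b, ∀ x : ℝ, |x| ≤ 1 →
      ((t, X t + x * u t, P t + x * w t) : ℝ × ℝ × ℝ) ∈ K := by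
    intro t ht x hx
    obtain ⟨h1, h2, h3, h4⟩ := hM t ht
    have e1 : |X t + x * u t| ≤ R := by
      calc |X t + x * u t| ≤ |X t| + |x| * |u t| := by
            rw [← abs_mul]; exact abs_add_le _ _
        _ ≤ M + 1 * M := by
            gcongr
        _ ≤ R := by rw [hRdef]; linarith
    have e2 : |P t + x * w t| ≤ R := by
      calc |P t + x * w t| ≤ |P t| + |x| * |w t| := by
            rw [← abs_mul]; exact abs_add_le _ _
        _ ≤ M + 1 * M := by gcongr
        _ ≤ R := by rw [hRdef]; linarith
    exact ⟨ht, abs_le.mp e1, abs_le.mp e2⟩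
  have hIoc : Set.uIoc a b = Ioc a b := uIoc_of_le hab.le
  have hcontF : ∀ x : ℝ, ContinuousOn (fun t => f t (X t + x * u t) (P t + x * w t)) (Icc a b) :=
    fun x => cont_comp3 hfc (hX.add (continuousOn_const.mul hu))
      (hP.add (continuousOn_const.mul hw))
  have main := intervalIntegral.hasDerivAt_integral_of_dominated_loc_of_deriv_le
    (𝕜 := ℝ) (μ := volume) (a := a) (b := b)
    (F := fun x t => f t (X t + x * u t) (P t + x * w t))
    (F' := fun x t => fy t (X t + x * u t) (P t + x * w t) * u t
      + fv t (X t + x * u t) (P t + x * w t) * w t)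
    (x₀ := 0) (bound := fun _ => C1 * M + C2 * M) (ball_mem_nhds 0 one_pos)
    (Filter.Eventually.of_forall fun x => by
      rw [hIoc]
      exact ((hcontF x).mono Ioc_subset_Icc_self).aestronglyMeasurable measurableSet_Ioc)
    (by
      apply ContinuousOn.intervalIntegrable
      rw [uIcc_of_le hab.le]
      exact hcontF 0)
    (by
      rw [hIoc]
      apply ContinuousOn.aestronglyMeasurable _ measurableSet_Ioc
      apply ContinuousOn.mono _ Ioc_subset_Icc_self
      exact ((cont_comp3 hyc (hX.add (continuousOn_const.mul hu))
          (hP.add (continuousOn_const.mul hw))).mul hu).add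
        ((cont_comp3 hvc (hX.add (continuousOn_const.mul hu))
          (hP.add (continuousOn_const.mul hw))).mul hw))
    (Filter.Eventually.of_forall fun t => by
      intro ht x hx
      rw [hIoc] at ht
      have ht' : t ∈ Icc a b := Ioc_subset_Icc_self ht
      have hxle : |x| ≤ 1 := by
        rw [mem_ball, Real.dist_eq, sub_zero] at hx
        exact hx.le
      have hk := hmem t ht' x hxle
      have b1 := hC1 _ hk
      have b2 := hC2 _ hk
      obtain ⟨h1, h2, h3, h4⟩ := hM t ht'
      simp only [Real.norm_eq_abs] at b1 b2 ⊢
      calc |fy t (X t + x * u t) (P t + x * w t) * u t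
          + fv t (X t + x * u t) (P t + x * w t) * w t|
          ≤ |fy t (X t + x * u t) (P t + x * w t)| * |u t|
            + |fv t (X t + x * u t) (P t + x * w t)| * |w t| := by
            rw [← abs_mul, ← abs_mul]; exact abs_add_le _ _
        _ ≤ C1 * M + C2 * M := by gcongr
    )
    intervalIntegrable_const
    (Filter.Eventually.of_forall fun t => by
      intro ht x hx
      rw [hIoc] at ht
      have ht' : t ∈ Icc a b := Ioc_subset_Icc_self ht
      exact hasDerivAt_comp_line (f t) (fy t) (fv t) (hy t ht') (hv t ht')
        (cont_fix hyc ht') (X t) (P t) (u t) (w t) x)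
  have h2 := main.2
  have : (∫ t in a..b, (fy t (X t + 0 * u t) (P t + 0 * w t) * u t
      + fv t (X t + 0 * u t) (P t + 0 * w t) * w t))
      = ∫ t in a..b, (fy t (X t) (P t) * u t + fv t (X t) (P t) * w t) := by
    apply intervalIntegral.integral_congr
    intro t _
    simp
  rwa [this] at h2

end

open Set Metric intervalIntegral MeasureTheory Topology Filter

section
variable {a b : ℝ}

lemma integral_FTC_hasDerivWithinAt (hab : a < b) {g : ℝ → ℝ}
    (hg : ContinuousOn g (Icc a b)) {t : ℝ} (ht : t ∈ Icc a b) :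
    HasDerivWithinAt (fun x => ∫ s in a..x, g s) (g t) (Icc a b) t := by
  haveI : Fact (t ∈ Icc a b) := ⟨ht⟩
  apply intervalIntegral.integral_hasDerivWithinAt_right (s := Icc a b) (t := Icc a b)
  · apply ContinuousOn.intervalIntegrable
    rw [uIcc_of_le ht.1]
    exact hg.mono (Icc_subset_Icc le_rfl ht.2)
  · exact ⟨Icc a b, self_mem_nhdsWithin, hg.aestronglyMeasurable measurableSet_Icc⟩
  · exact hg t ht

/-- du Bois-Reymond / fundamental lemma conclusion. -/
lemma duBoisReymond (hab : a < b) (g h : ℝ → ℝ)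
    (hg : ContinuousOn g (Icc a b)) (hh : ContinuousOn h (Icc a b))
    (hzero : ∀ η : ℝ → ℝ, ContDiffOn ℝ 1 η (Icc a b) → η a = 0 → η b = 0 →
      (∫ t in a..b, (g t * η t + h t * derivWithin η (Icc a b) t)) = 0) :
    ∀ t ∈ Icc a b, HasDerivWithinAt h (g t) (Icc a b) t := by
  have huD : UniqueDiffOn ℝ (Icc a b) := uniqueDiffOn_Icc hab
  set G : ℝ → ℝ := fun x => ∫ s in a..x, g s with hGdef
  have hGd : ∀ t ∈ Icc a b, HasDerivWithinAt G (g t) (Icc a b) t :=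
    fun t ht => integral_FTC_hasDerivWithinAt hab hg ht
  have hGc : ContinuousOn G (Icc a b) :=
    fun t ht => (hGd t ht).differentiableWithinAt.continuousWithinAt
  set φ : ℝ → ℝ := fun t => h t - G t with hφdef
  have hφc : ContinuousOn φ (Icc a b) := hh.sub hGc
  -- Step: for every test function, ∫ φ * η' = 0
  have key : ∀ η : ℝ → ℝ, ContDiffOn ℝ 1 η (Icc a b) → η a = 0 → η b = 0 →
      (∫ t in a..b, φ t * derivWithin η (Icc a b) t) = 0 := by
    intro η hη hηa hηb
    have hη' : ContinuousOn (derivWithin η (Icc a b)) (Icc a b) :=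
      hη.continuousOn_derivWithin huD le_rfl
    have hηc : ContinuousOn η (Icc a b) := hη.continuousOn
    have hηd : ∀ t ∈ Icc a b, HasDerivWithinAt η (derivWithin η (Icc a b) t) (Icc a b) t :=
      fun t ht => (hη.differentiableOn one_ne_zero t ht).hasDerivWithinAt
    -- integration by parts for G * η
    have hWd : ∀ t ∈ Icc a b, HasDerivWithinAt (fun s => G s * η s)
        (g t * η t + G t * derivWithin η (Icc a b) t) (Icc a b) t :=
      fun t ht => (hGd t ht).mul (hηd t ht)
    have hFTC : (∫ t in a..b, (g t * η t + G t * derivWithin η (Icc a b) t))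
        = G b * η b - G a * η a := by
      apply intervalIntegral.integral_eq_sub_of_hasDeriv_right
      · rw [uIcc_of_le hab.le]
        exact hGc.mul hηc
      · rw [min_eq_left hab.le, max_eq_right hab.le]
        intro x hx
        have hx' : x ∈ Icc a b := Ioo_subset_Icc_self hx
        exact ((hWd x hx').hasDerivAt (Icc_mem_nhds hx.1 hx.2)).hasDerivWithinAt
      · apply ContinuousOn.intervalIntegrable
        rw [uIcc_of_le hab.le]
        exact ((hg.mul hηc)).add (hGc.mul hη')
    rw [hηa, hηb, mul_zero, mul_zero, sub_zero] at hFTC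
    have h1 := hzero η hη hηa hηb
    have int1 : IntervalIntegrable (fun t => g t * η t + h t * derivWithin η (Icc a b) t)
        volume a b := by
      apply ContinuousOn.intervalIntegrable
      rw [uIcc_of_le hab.le]
      exact (hg.mul hηc).add (hh.mul hη')
    have int2 : IntervalIntegrable (fun t => g t * η t + G t * derivWithin η (Icc a b) t)
        volume a b := by
      apply ContinuousOn.intervalIntegrable
      rw [uIcc_of_le hab.le]
      exact (hg.mul hηc).add (hGc.mul hη')
    have hsub := intervalIntegral.integral_sub int1 int2
    rw [h1, hFTC, sub_zero] at hsub
    rw [← hsub]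
    apply intervalIntegral.integral_congr
    intro t _
    simp [hφdef]
    ring
  -- choose the canonical test function
  set c : ℝ := (∫ t in a..b, φ t) / (b - a) with hcdef
  have hbane : b - a ≠ 0 := sub_ne_zero.mpr hab.ne'
  have hφint : IntervalIntegrable φ volume a b := by
    apply ContinuousOn.intervalIntegrable
    rw [uIcc_of_le hab.le]
    exact hφc
  have hφcint : ContinuousOn (fun t => φ t - c) (Icc a b) := hφc.sub continuousOn_const
  set η₀ : ℝ → ℝ := fun x => ∫ s in a..x, (φ s - c) with hη₀def
  have hη₀d : ∀ t ∈ Icc a b, HasDerivWithinAt η₀ (φ t - c) (Icc a b) t :=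
    fun t ht => integral_FTC_hasDerivWithinAt hab hφcint ht
  have hη₀dw : ∀ t ∈ Icc a b, derivWithin η₀ (Icc a b) t = φ t - c :=
    fun t ht => (hη₀d t ht).derivWithin (huD t ht)
  have hη₀smooth : ContDiffOn ℝ 1 η₀ (Icc a b) := by
    have h01 : ContDiffOn ℝ (0 + 1) η₀ (Icc a b) := by
      rw [contDiffOn_succ_iff_derivWithin huD]
      refine ⟨fun t ht => (hη₀d t ht).differentiableWithinAt, ?_, ?_⟩
      · intro habs; exact absurd habs (by norm_num)
      · rw [contDiffOn_zero]
        exact ContinuousOn.congr hφcint (fun t ht => hη₀dw t ht)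
    simpa using h01
  have hη₀a : η₀ a = 0 := intervalIntegral.integral_same
  have hintsub : (∫ s in a..b, (φ s - c)) = 0 := by
    rw [intervalIntegral.integral_sub hφint intervalIntegrable_const,
      intervalIntegral.integral_const, hcdef]
    rw [smul_eq_mul, mul_div_assoc', mul_div_cancel_left₀ _ hbane, sub_self]
  have hη₀b : η₀ b = 0 := hintsub
  have hkey := key η₀ hη₀smooth hη₀a hη₀b
  -- ∫ φ (φ - c) = 0
  have hint2 : (∫ t in a..b, φ t * (φ t - c)) = 0 := by
    rw [← hkey]
    apply intervalIntegral.integral_congr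
    intro t ht
    rw [uIcc_of_le hab.le] at ht
    show φ t * (φ t - c) = φ t * derivWithin η₀ (Icc a b) t
    rw [hη₀dw t ht]
  -- ∫ (φ - c)^2 = 0
  have hsq : (∫ t in a..b, (φ t - c)^2) = 0 := by
    have e : ∀ t, (φ t - c)^2 = φ t * (φ t - c) - c * (φ t - c) := by intro t; ring
    have intA : IntervalIntegrable (fun t => φ t * (φ t - c)) volume a b := by
      apply ContinuousOn.intervalIntegrable
      rw [uIcc_of_le hab.le]; exact hφc.mul hφcint
    have intB : IntervalIntegrable (fun t => c * (φ t - c)) volume a b := by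
      apply ContinuousOn.intervalIntegrable
      rw [uIcc_of_le hab.le]; exact continuousOn_const.mul hφcint
    have hB : (∫ t in a..b, c * (φ t - c)) = 0 := by
      rw [intervalIntegral.integral_const_mul, hintsub, mul_zero]
    calc (∫ t in a..b, (φ t - c)^2) = ∫ t in a..b, (φ t * (φ t - c) - c * (φ t - c)) := by
          apply intervalIntegral.integral_congr; intro t _; exact e t
      _ = (∫ t in a..b, φ t * (φ t - c)) - ∫ t in a..b, c * (φ t - c) :=
          intervalIntegral.integral_sub intA intB
      _ = 0 := by rw [hint2, hB, sub_zero]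
  -- conclude φ = c on Icc a b
  set ψ : ℝ → ℝ := fun t => (φ t - c)^2 with hψdef
  have hψc : ContinuousOn ψ (Icc a b) := (hφcint.pow 2)
  have hψ0 : ∀ t ∈ Ioo a b, ψ t = 0 := by
    by_contra hcon
    push_neg at hcon
    obtain ⟨t₀, ht₀, hne⟩ := hcon
    have hpos : 0 < ψ t₀ := lt_of_le_of_ne (sq_nonneg _) (Ne.symm hne)
    set O : Set ℝ := Ioo a b ∩ ψ ⁻¹' (Ioi 0) with hOdef
    have hOopen : IsOpen O := by
      apply ContinuousOn.isOpen_inter_preimage _ isOpen_Ioo isOpen_Ioi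
      exact hψc.mono Ioo_subset_Icc_self
    have hOne : O.Nonempty := ⟨t₀, ht₀, hpos⟩
    have hOpos : 0 < volume O := hOopen.measure_pos volume hOne
    -- but ∫ ψ = 0 with ψ ≥ 0 implies ψ = 0 a.e.
    have hψint : IntervalIntegrable ψ volume a b := by
      apply ContinuousOn.intervalIntegrable
      rw [uIcc_of_le hab.le]; exact hψc
    have hae := (intervalIntegral.integral_eq_zero_iff_of_le_of_nonneg_ae hab.le
      (Filter.Eventually.of_forall (fun t => sq_nonneg _)) hψint).mp hsq
    -- ψ = 0 a.e. on Ioc a b, but ψ > 0 on O of positive measure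
    have hOsub : O ⊆ {t | ψ t ≠ 0} ∩ Ioc a b := by
      intro t ht
      exact ⟨ne_of_gt ht.2, Ioo_subset_Ioc_self ht.1⟩
    have : volume ({t | ψ t ≠ 0} ∩ Ioc a b) = 0 := by
      have := hae
      rw [Filter.EventuallyEq, ae_restrict_iff' measurableSet_Ioc] at this
      rw [ae_iff] at this
      convert this using 2
      ext t
      simp only [mem_inter_iff, mem_setOf_eq, mem_Ioc, Classical.not_imp, Pi.zero_apply]
      tauto
    exact absurd (le_trans (measure_mono hOsub) this.le) (not_le.mpr hOpos)
  have hψIcc : ∀ t ∈ Icc a b, ψ t = 0 := by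
    intro t ht
    rcases eq_or_lt_of_le ht.1 with h1 | h1
    · -- t = a
      subst h1
      have hten : Filter.Tendsto ψ (𝓝[Ioo a b] a) (𝓝 (ψ a)) :=
        ((hψc a ht).mono Ioo_subset_Icc_self)
      have hten0 : Filter.Tendsto ψ (𝓝[Ioo a b] a) (𝓝 0) := by
        apply Filter.Tendsto.congr' _ tendsto_const_nhds
        filter_upwards [self_mem_nhdsWithin] with s hs
        exact (hψ0 s hs).symm
      haveI : Filter.NeBot (𝓝[Ioo a b] a) := by
        rw [nhdsWithin_Ioo_eq_nhdsGT hab]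
        infer_instance
      exact tendsto_nhds_unique hten hten0
    rcases eq_or_lt_of_le ht.2 with h2 | h2
    · -- t = b
      subst h2
      have hten : Filter.Tendsto ψ (𝓝[Ioo a t] t) (𝓝 (ψ t)) :=
        ((hψc t ht).mono Ioo_subset_Icc_self)
      have hten0 : Filter.Tendsto ψ (𝓝[Ioo a t] t) (𝓝 0) := by
        apply Filter.Tendsto.congr' _ tendsto_const_nhds
        filter_upwards [self_mem_nhdsWithin] with s hs
        exact (hψ0 s hs).symm
      haveI : Filter.NeBot (𝓝[Ioo a t] t) := by
        rw [nhdsWithin_Ioo_eq_nhdsLT hab]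
        infer_instance
      exact tendsto_nhds_unique hten hten0
    · exact hψ0 t ⟨h1, h2⟩
  have hφeq : ∀ t ∈ Icc a b, φ t = c := by
    intro t ht
    have := hψIcc t ht
    have : φ t - c = 0 := by
      have := pow_eq_zero_iff (n := 2) (by norm_num) |>.mp this
      exact this
    linarith
  -- conclude
  intro t ht
  have hGc' : HasDerivWithinAt (fun s => G s + c) (g t) (Icc a b) t :=
    (hGd t ht).add_const c
  apply hGc'.congr _ _
  · intro s hs
    have := hφeq s hs
    simp only [hφdef] at this
    linarith
  · have := hφeq t ht
    simp only [hφdef] at this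
    linarith
end



/-- The C¹-norm ‖x‖₁ = sup_{t∈[a,b]} |x(t)| + sup_{t∈[a,b]} |x'(t)|. -/
noncomputable def C1Norm (a b : ℝ) (x : ℝ → ℝ) : ℝ :=
  (⨆ t : Set.Icc a b, |x t|) + (⨆ t : Set.Icc a b, |derivWithin x (Set.Icc a b) t|)

/-- Euler–Lagrange equation for the quotient functional
`L[x] = F₁[x] / F₂[x]` with both endpoints fixed. -/
theorem quotient_euler_lagrange
    (a b : ℝ) (hab : a < b)
    (f1 f1y f1v f2 f2y f2v : ℝ → ℝ → ℝ → ℝ)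
    (hf1_cont : ContinuousOn (fun p : ℝ × ℝ × ℝ => f1 p.1 p.2.1 p.2.2)
      (Set.Icc a b ×ˢ (Set.univ : Set ℝ) ×ˢ (Set.univ : Set ℝ)))
    (hf2_cont : ContinuousOn (fun p : ℝ × ℝ × ℝ => f2 p.1 p.2.1 p.2.2)
      (Set.Icc a b ×ˢ (Set.univ : Set ℝ) ×ˢ (Set.univ : Set ℝ)))
    (hf1y : ∀ t ∈ Set.Icc a b, ∀ y v : ℝ,
      HasDerivAt (fun y' => f1 t y' v) (f1y t y v) y)
    (hf1v : ∀ t ∈ Set.Icc a b, ∀ y v : ℝ,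
      HasDerivAt (fun v' => f1 t y v') (f1v t y v) v)
    (hf2y : ∀ t ∈ Set.Icc a b, ∀ y v : ℝ,
      HasDerivAt (fun y' => f2 t y' v) (f2y t y v) y)
    (hf2v : ∀ t ∈ Set.Icc a b, ∀ y v : ℝ,
      HasDerivAt (fun v' => f2 t y v') (f2v t y v) v)
    (hf1y_cont : ContinuousOn (fun p : ℝ × ℝ × ℝ => f1y p.1 p.2.1 p.2.2)
      (Set.Icc a b ×ˢ (Set.univ : Set ℝ) ×ˢ (Set.univ : Set ℝ)))
    (hf1v_cont : ContinuousOn (fun p : ℝ × ℝ × ℝ => f1v p.1 p.2.1 p.2.2)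
      (Set.Icc a b ×ˢ (Set.univ : Set ℝ) ×ˢ (Set.univ : Set ℝ)))
    (hf2y_cont : ContinuousOn (fun p : ℝ × ℝ × ℝ => f2y p.1 p.2.1 p.2.2)
      (Set.Icc a b ×ˢ (Set.univ : Set ℝ) ×ˢ (Set.univ : Set ℝ)))
    (hf2v_cont : ContinuousOn (fun p : ℝ × ℝ × ℝ => f2v p.1 p.2.1 p.2.2)
      (Set.Icc a b ×ˢ (Set.univ : Set ℝ) ×ˢ (Set.univ : Set ℝ)))
    (xa xb : ℝ) (xE : ℝ → ℝ)
    (hxE : ContDiffOn ℝ 1 xE (Set.Icc a b))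
    (hxEa : xE a = xa) (hxEb : xE b = xb)
    (hdiff1 : ∀ t ∈ Set.Icc a b,
      DifferentiableWithinAt ℝ
        (fun s => f1v s (xE s) (derivWithin xE (Set.Icc a b) s)) (Set.Icc a b) t)
    (hdiff2 : ∀ t ∈ Set.Icc a b,
      DifferentiableWithinAt ℝ
        (fun s => f2v s (xE s) (derivWithin xE (Set.Icc a b) s)) (Set.Icc a b) t)
    (F1 F2 : (ℝ → ℝ) → ℝ)
    (hF1 : ∀ x, F1 x = ∫ t in a..b, f1 t (x t) (derivWithin x (Set.Icc a b) t))
    (hF2 : ∀ x, F2 x = ∫ t in a..b, f2 t (x t) (derivWithin x (Set.Icc a b) t))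
    (hF2ne : ∀ x : ℝ → ℝ, ContDiffOn ℝ 1 x (Set.Icc a b) →
      x a = xa → x b = xb → F2 x ≠ 0)
    (L : (ℝ → ℝ) → ℝ)
    (hL : ∀ x, L x = F1 x / F2 x)
    (hext :
      (∃ δ > 0, ∀ x : ℝ → ℝ, ContDiffOn ℝ 1 x (Set.Icc a b) →
        x a = xa → x b = xb → C1Norm a b (fun t => x t - xE t) < δ → L xE ≤ L x) ∨
      (∃ δ > 0, ∀ x : ℝ → ℝ, ContDiffOn ℝ 1 x (Set.Icc a b) →
        x a = xa → x b = xb → C1Norm a b (fun t => x t - xE t) < δ → L x ≤ L xE)) :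
    ∀ t ∈ Set.Icc a b,
      f1y t (xE t) (derivWithin xE (Set.Icc a b) t) -
        (F1 xE / F2 xE) * f2y t (xE t) (derivWithin xE (Set.Icc a b) t) -
        derivWithin (fun s => f1v s (xE s) (derivWithin xE (Set.Icc a b) s) -
            (F1 xE / F2 xE) * f2v s (xE s) (derivWithin xE (Set.Icc a b) s))
          (Set.Icc a b) t = 0 := by
  have hI : UniqueDiffOn ℝ (Icc a b) := uniqueDiffOn_Icc hab
  have haI : a ∈ Icc a b := left_mem_Icc.mpr hab.le
  have hbI : b ∈ Icc a b := right_mem_Icc.mpr hab.le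
  haveI : Nonempty (Icc a b) := ⟨⟨a, haI⟩⟩
  set p : ℝ → ℝ := derivWithin xE (Icc a b) with hpdef
  have hxEc : ContinuousOn xE (Icc a b) := hxE.continuousOn
  have hpc : ContinuousOn p (Icc a b) := hxE.continuousOn_derivWithin hI le_rfl
  have hxEd : ∀ t ∈ Icc a b, HasDerivWithinAt xE (p t) (Icc a b) t :=
    fun t ht => (hxE.differentiableOn one_ne_zero t ht).hasDerivWithinAt
  set Q : ℝ := F1 xE / F2 xE with hQdef
  set g : ℝ → ℝ := fun t => f1y t (xE t) (p t) - Q * f2y t (xE t) (p t) with hgdef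
  set h : ℝ → ℝ := fun t => f1v t (xE t) (p t) - Q * f2v t (xE t) (p t) with hhdef
  have hgc : ContinuousOn g (Icc a b) :=
    (cont_comp3 hf1y_cont hxEc hpc).sub (continuousOn_const.mul (cont_comp3 hf2y_cont hxEc hpc))
  have hhc : ContinuousOn h (Icc a b) :=
    (cont_comp3 hf1v_cont hxEc hpc).sub (continuousOn_const.mul (cont_comp3 hf2v_cont hxEc hpc))
  have hD0ne : F2 xE ≠ 0 := hF2ne xE hxE hxEa hxEb
  -- the variational identity
  have hzero : ∀ η : ℝ → ℝ, ContDiffOn ℝ 1 η (Icc a b) → η a = 0 → η b = 0 →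
      (∫ t in a..b, (g t * η t + h t * derivWithin η (Icc a b) t)) = 0 := by
    intro η hη hηa hηb
    set q : ℝ → ℝ := derivWithin η (Icc a b) with hqdef
    have hηc : ContinuousOn η (Icc a b) := hη.continuousOn
    have hqc : ContinuousOn q (Icc a b) := hη.continuousOn_derivWithin hI le_rfl
    have hηd : ∀ t ∈ Icc a b, HasDerivWithinAt η (q t) (Icc a b) t :=
      fun t ht => (hη.differentiableOn one_ne_zero t ht).hasDerivWithinAt
    -- derivative of the perturbed curve
    have hderiv_eq : ∀ ε : ℝ, ∀ t ∈ Icc a b,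
        derivWithin (fun s => xE s + ε * η s) (Icc a b) t = p t + ε * q t := by
      intro ε t ht
      exact ((hxEd t ht).add ((hηd t ht).const_mul ε)).derivWithin (hI t ht)
    set N : ℝ → ℝ := fun ε => ∫ t in a..b, f1 t (xE t + ε * η t) (p t + ε * q t) with hNdef
    set D : ℝ → ℝ := fun ε => ∫ t in a..b, f2 t (xE t + ε * η t) (p t + ε * q t) with hDdef
    set N' : ℝ := ∫ t in a..b, (f1y t (xE t) (p t) * η t + f1v t (xE t) (p t) * q t) with hN'def
    set D' : ℝ := ∫ t in a..b, (f2y t (xE t) (p t) * η t + f2v t (xE t) (p t) * q t) with hD'def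
    have hNd : HasDerivAt N N' 0 :=
      hasDerivAt_param_integral hab f1 f1y f1v hf1_cont hf1y_cont hf1v_cont hf1y hf1v
        xE p η q hxEc hpc hηc hqc
    have hDd : HasDerivAt D D' 0 :=
      hasDerivAt_param_integral hab f2 f2y f2v hf2_cont hf2y_cont hf2v_cont hf2y hf2v
        xE p η q hxEc hpc hηc hqc
    have hF1eq : ∀ ε : ℝ, F1 (fun t => xE t + ε * η t) = N ε := by
      intro ε
      rw [hF1]
      apply intervalIntegral.integral_congr
      intro t ht
      rw [uIcc_of_le hab.le] at ht
      show f1 t (xE t + ε * η t) (derivWithin (fun s => xE s + ε * η s) (Icc a b) t)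
        = f1 t (xE t + ε * η t) (p t + ε * q t)
      rw [hderiv_eq ε t ht]
    have hF2eq : ∀ ε : ℝ, F2 (fun t => xE t + ε * η t) = D ε := by
      intro ε
      rw [hF2]
      apply intervalIntegral.integral_congr
      intro t ht
      rw [uIcc_of_le hab.le] at ht
      show f2 t (xE t + ε * η t) (derivWithin (fun s => xE s + ε * η s) (Icc a b) t)
        = f2 t (xE t + ε * η t) (p t + ε * q t)
      rw [hderiv_eq ε t ht]
    have hN0 : N 0 = F1 xE := by
      rw [hF1]
      apply intervalIntegral.integral_congr
      intro t _
      show f1 t (xE t + 0 * η t) (p t + 0 * q t) = f1 t (xE t) (p t)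
      norm_num
    have hD0 : D 0 = F2 xE := by
      rw [hF2]
      apply intervalIntegral.integral_congr
      intro t _
      show f2 t (xE t + 0 * η t) (p t + 0 * q t) = f2 t (xE t) (p t)
      norm_num
    have hD0ne' : D 0 ≠ 0 := by rw [hD0]; exact hD0ne
    set ψ : ℝ → ℝ := fun ε => N ε / D ε with hψdef
    have hψd : HasDerivAt ψ ((N' * D 0 - N 0 * D') / (D 0) ^ 2) 0 := hNd.div hDd hD0ne'
    have hψL : ∀ ε : ℝ, ψ ε = L (fun t => xE t + ε * η t) := by
      intro ε
      rw [hL, hF1eq, hF2eq]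
    have hψ0 : ψ 0 = L xE := by
      show N 0 / D 0 = L xE
      rw [hL, hN0, hD0]
    -- admissibility of perturbed curves
    have hadm : ∀ ε : ℝ, ContDiffOn ℝ 1 (fun t => xE t + ε * η t) (Icc a b) :=
      fun ε => hxE.add (contDiffOn_const.mul hη)
    have hadma : ∀ ε : ℝ, xE a + ε * η a = xa := by intro ε; rw [hxEa, hηa]; ring
    have hadmb : ∀ ε : ℝ, xE b + ε * η b = xb := by intro ε; rw [hxEb, hηb]; ring
    -- C¹-norm smallness
    obtain ⟨Mη, hMη⟩ := isCompact_Icc.exists_bound_of_continuousOn hηc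
    obtain ⟨Mq, hMq⟩ := isCompact_Icc.exists_bound_of_continuousOn hqc
    have hMη0 : 0 ≤ Mη := le_trans (norm_nonneg _) (hMη a haI)
    have hMq0 : 0 ≤ Mq := le_trans (norm_nonneg _) (hMq a haI)
    have hnorm : ∀ δ : ℝ, 0 < δ → ∀ ε : ℝ, |ε| < δ / (Mη + Mq + 1) →
        C1Norm a b (fun t => (xE t + ε * η t) - xE t) < δ := by
      intro δ hδ ε hε
      have hε0 : |ε| * (Mη + Mq) < δ := by
        have h1 : |ε| * (Mη + Mq + 1) < δ := by
          rw [← lt_div_iff₀ (by linarith : (0:ℝ) < Mη + Mq + 1)]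
          exact hε
        nlinarith [abs_nonneg ε]
      have hb1 : (⨆ t : Icc a b, |(xE t + ε * η t) - xE t|) ≤ |ε| * Mη := by
        apply ciSup_le
        intro t
        have := hMη t t.2
        rw [Real.norm_eq_abs] at this
        calc |(xE t + ε * η t) - xE t| = |ε| * |η t| := by
              rw [← abs_mul]; congr 1; ring
          _ ≤ |ε| * Mη := by gcongr
      have hb2 : (⨆ t : Icc a b,
          |derivWithin (fun s => (xE s + ε * η s) - xE s) (Icc a b) t|) ≤ |ε| * Mq := by
        apply ciSup_le
        intro t
        have hdw : derivWithin (fun s => (xE s + ε * η s) - xE s) (Icc a b) t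
            = (p t + ε * q t) - p t := by
          exact (((hxEd t t.2).add ((hηd t t.2).const_mul ε)).sub (hxEd t t.2)).derivWithin
            (hI t t.2)
        rw [hdw]
        have := hMq t t.2
        rw [Real.norm_eq_abs] at this
        calc |(p t + ε * q t) - p t| = |ε| * |q t| := by
              rw [← abs_mul]; congr 1; ring
          _ ≤ |ε| * Mq := by gcongr
      have : C1Norm a b (fun t => (xE t + ε * η t) - xE t) ≤ |ε| * Mη + |ε| * Mq :=
        add_le_add hb1 hb2
      calc C1Norm a b (fun t => (xE t + ε * η t) - xE t) ≤ |ε| * Mη + |ε| * Mq := this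
        _ = |ε| * (Mη + Mq) := by ring
        _ < δ := hε0
    -- the derivative of ψ at 0 vanishes
    have hcrit : (N' * D 0 - N 0 * D') / (D 0) ^ 2 = 0 := by
      rcases hext with ⟨δ, hδ, hmin⟩ | ⟨δ, hδ, hmax⟩
      · have hloc : IsLocalMin ψ 0 := by
          rw [IsLocalMin, IsMinFilter]
          rw [Metric.eventually_nhds_iff]
          refine ⟨δ / (Mη + Mq + 1), by positivity, ?_⟩
          intro ε hεd
          rw [Real.dist_eq, sub_zero] at hεd
          rw [hψ0, hψL ε]
          exact hmin _ (hadm ε) (hadma ε) (hadmb ε) (hnorm δ hδ ε hεd)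
        exact hloc.hasDerivAt_eq_zero hψd
      · have hloc : IsLocalMax ψ 0 := by
          rw [IsLocalMax, IsMaxFilter]
          rw [Metric.eventually_nhds_iff]
          refine ⟨δ / (Mη + Mq + 1), by positivity, ?_⟩
          intro ε hεd
          rw [Real.dist_eq, sub_zero] at hεd
          rw [hψ0, hψL ε]
          exact hmax _ (hadm ε) (hadma ε) (hadmb ε) (hnorm δ hδ ε hεd)
        exact hloc.hasDerivAt_eq_zero hψd
    have hnum : N' = Q * D' := by
      have h2 : (D 0) ^ 2 ≠ 0 := pow_ne_zero 2 hD0ne'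
      have h1 : N' * D 0 - N 0 * D' = 0 := (div_eq_zero_iff.mp hcrit).resolve_right h2
      rw [hQdef, ← hN0, ← hD0]
      field_simp
      linarith
    -- assemble the integral identity
    have intA : IntervalIntegrable (fun t => f1y t (xE t) (p t) * η t
        + f1v t (xE t) (p t) * q t) volume a b := by
      apply ContinuousOn.intervalIntegrable
      rw [uIcc_of_le hab.le]
      exact ((cont_comp3 hf1y_cont hxEc hpc).mul hηc).add
        ((cont_comp3 hf1v_cont hxEc hpc).mul hqc)
    have intB : IntervalIntegrable (fun t => Q * (f2y t (xE t) (p t) * η t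
        + f2v t (xE t) (p t) * q t)) volume a b := by
      apply ContinuousOn.intervalIntegrable
      rw [uIcc_of_le hab.le]
      exact continuousOn_const.mul (((cont_comp3 hf2y_cont hxEc hpc).mul hηc).add
        ((cont_comp3 hf2v_cont hxEc hpc).mul hqc))
    have e1 : (∫ t in a..b, (g t * η t + h t * q t))
        = (∫ t in a..b, (f1y t (xE t) (p t) * η t + f1v t (xE t) (p t) * q t))
          - ∫ t in a..b, Q * (f2y t (xE t) (p t) * η t + f2v t (xE t) (p t) * q t) := by
      rw [← intervalIntegral.integral_sub intA intB]
      apply intervalIntegral.integral_congr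
      intro t _
      show g t * η t + h t * q t = _
      rw [hgdef, hhdef]
      ring
    rw [e1, intervalIntegral.integral_const_mul, ← hN'def, ← hD'def, hnum, sub_self]
  -- apply du Bois-Reymond
  have hmain := duBoisReymond hab g h hgc hhc hzero
  intro t ht
  have hDW : derivWithin h (Icc a b) t = g t := (hmain t ht).derivWithin (hI t ht)
  show g t - derivWithin h (Icc a b) t = 0
  rw [hDW, sub_self]
end

section
/- Let a < b be real numbers and let f_1, f_2 : [a,b] × ℝ × ℝ → ℝ be continuous with continuous partial derivatives f_{1y}, f_{1v}, f_{2y}, f_{2v} with respect to their second and third arguments. Suppose x̃ : [a,b] → ℝ is C¹ with x̃(b) = x_b (the value x(a) is not specified), that F_2[x] ≠ 0 for every C¹ function x with x(b) = x_b, and that x̃ is a weak local extremizer of the quotient functional L[x] = F_1[x] / F_2[x] among such admissible functions: there exists δ > 0 such that L[x̃] ≤ L[x] for every admissible x with ‖x − x̃‖₁ < δ (or L[x̃] ≥ L[x] for all such x). Then, with Q = F_1[x̃] / F_2[x̃], the natural boundary condition f_{1v}(a, x̃(a), x̃'(a)) − Q · f_{2v}(a, x̃(a), x̃'(a)) = 0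 holds. -/
open Set Metric

/-- Derivative along a line, from separate partial derivatives, with the `y`-partial
continuous at the point. -/
lemma hasDerivAt_line {f fy : ℝ → ℝ → ℝ} {y0 c v0 d ε0 fv' : ℝ}
    (hfy : ∀ y v, HasDerivAt (fun y' => f y' v) (fy y v) y)
    (hfv : HasDerivAt (fun v' => f (y0 + ε0 * c) v') fv' (v0 + ε0 * d))
    (hfy_cont : ContinuousAt (fun p : ℝ × ℝ => fy p.1 p.2) (y0 + ε0 * c, v0 + ε0 * d)) :
    HasDerivAt (fun ε => f (y0 + ε * c) (v0 + ε * d))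
      (fy (y0 + ε0 * c) (v0 + ε0 * d) * c + fv' * d) ε0 := by
  set y0' := y0 + ε0 * c with hy0'
  set v0' := v0 + ε0 * d with hv0'
  have hB : HasDerivAt (fun ε => f y0' (v0 + ε * d)) (fv' * d) ε0 := by
    have h1 : HasDerivAt (fun ε : ℝ => v0 + ε * d) d ε0 := by
      simpa using ((hasDerivAt_id ε0).mul_const d).const_add v0
    exact hfv.comp ε0 h1
  have hA : HasDerivAt (fun ε => f (y0 + ε * c) (v0 + ε * d) - f y0' (v0 + ε * d))
      (fy y0' v0' * c) ε0 := by
    rcases eq_or_ne c 0 with hc | hc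
    · have hy : y0' = y0 := by simp [hy0', hc]
      have hfun : (fun ε => f (y0 + ε * c) (v0 + ε * d) - f y0' (v0 + ε * d))
          = fun _ => (0:ℝ) := by
        funext ε; simp [hc, hy]
      rw [hfun, hc, mul_zero]
      exact hasDerivAt_const ε0 (0:ℝ)
    · rw [hasDerivAt_iff_tendsto_slope, Metric.tendsto_nhdsWithin_nhds]
      intro ε' hε'
      have hc1 : (0:ℝ) < |c| := abs_pos.mpr hc
      obtain ⟨δ', hδ', hcont⟩ := Metric.continuousAt_iff.mp hfy_cont (ε' / (|c| + 1))
        (by positivity)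
      have hS : (0:ℝ) < |c| + |d| + 1 := by positivity
      refine ⟨δ' / (|c| + |d| + 1), by positivity, ?_⟩
      intro ε hεne hεd
      have hεne' : ε ≠ ε0 := hεne
      have hne : ε - ε0 ≠ 0 := sub_ne_zero.mpr hεne'
      set vε := v0 + ε * d with hvε
      set y2 := y0 + ε * c with hy2
      have hy2y0' : y2 - y0' = c * (ε - ε0) := by simp only [hy2, hy0']; ring
      have hy2ne : y2 ≠ y0' := by
        intro h
        have : c * (ε - ε0) = 0 := by rw [← hy2y0', h, sub_self]
        exact hne ((mul_eq_zero.mp this).resolve_left hc)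
      have key : ∃ ξ, |ξ - y0'| < |y2 - y0'| ∧
          fy ξ vε * (y2 - y0') = f y2 vε - f y0' vε := by
        rcases lt_or_gt_of_ne hy2ne with h | h
        · obtain ⟨ξ, hξ, hval⟩ := exists_hasDerivAt_eq_slope (fun y => f y vε) (fun y => fy y vε)
            h (fun y _ => (hfy y vε).continuousAt.continuousWithinAt)
            (fun y _ => hfy y vε)
          refine ⟨ξ, ?_, ?_⟩
          · rw [abs_of_neg (by linarith [hξ.2] : ξ - y0' < 0),
              abs_of_neg (by linarith : y2 - y0' < 0)]
            linarith [hξ.1]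
          · have hne2 : y0' - y2 ≠ 0 := by intro h'; apply hy2ne; linarith
            rw [eq_div_iff hne2] at hval
            nlinarith [hval]
        · obtain ⟨ξ, hξ, hval⟩ := exists_hasDerivAt_eq_slope (fun y => f y vε) (fun y => fy y vε)
            h (fun y _ => (hfy y vε).continuousAt.continuousWithinAt)
            (fun y _ => hfy y vε)
          refine ⟨ξ, ?_, ?_⟩
          · rw [abs_of_pos (by linarith [hξ.1] : (0:ℝ) < ξ - y0'),
              abs_of_pos (by linarith : (0:ℝ) < y2 - y0')]
            linarith [hξ.2]
          · have hne2 : y2 - y0' ≠ 0 := sub_ne_zero.mpr hy2ne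
            rw [eq_div_iff hne2] at hval
            linarith [hval]
      obtain ⟨ξ, hξclose, hξval⟩ := key
      have hslope : slope (fun ε => f (y0 + ε * c) (v0 + ε * d) - f y0' (v0 + ε * d)) ε0 ε
          = fy ξ vε * c := by
        rw [slope_def_field]
        have h0 : f (y0 + ε0 * c) (v0 + ε0 * d) - f y0' (v0 + ε0 * d) = 0 := by
          rw [← hy0', ← hv0', sub_self]
        have hnum : f (y0 + ε * c) (v0 + ε * d) - f y0' (v0 + ε * d) = f y2 vε - f y0' vε := rfl
        rw [hnum, h0, sub_zero, ← hξval, hy2y0']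
        field_simp
      rw [hslope]
      have hεd' : |ε - ε0| < δ' / (|c| + |d| + 1) := by
        simpa [Real.dist_eq] using hεd
      have hd1 : dist (ξ, vε) (y0', v0') < δ' := by
        rw [Prod.dist_eq]
        have hcd : |c| * (δ' / (|c| + |d| + 1)) ≤ δ' ∧ |d| * (δ' / (|c| + |d| + 1)) ≤ δ' := by
          have hSδ : (|c| + |d| + 1) * (δ' / (|c| + |d| + 1)) = δ' := by field_simp
          have hdnn : (0:ℝ) ≤ δ' / (|c| + |d| + 1) := by positivity
          constructor
          · calc |c| * (δ' / (|c| + |d| + 1)) ≤ (|c| + |d| + 1) * (δ' / (|c| + |d| + 1)) :=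
                mul_le_mul_of_nonneg_right (by linarith [abs_nonneg d]) hdnn
              _ = δ' := hSδ
          · calc |d| * (δ' / (|c| + |d| + 1)) ≤ (|c| + |d| + 1) * (δ' / (|c| + |d| + 1)) :=
                mul_le_mul_of_nonneg_right (by linarith [abs_nonneg c]) hdnn
              _ = δ' := hSδ
        have h1 : dist ξ y0' < δ' := by
          rw [Real.dist_eq]
          calc |ξ - y0'| < |y2 - y0'| := hξclose
            _ = |c| * |ε - ε0| := by rw [hy2y0', abs_mul]
            _ < |c| * (δ' / (|c| + |d| + 1)) := mul_lt_mul_of_pos_left hεd' hc1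
            _ ≤ δ' := hcd.1
        have h2 : dist vε v0' < δ' := by
          rw [Real.dist_eq]
          have hveq : vε - v0' = d * (ε - ε0) := by simp only [hvε, hv0']; ring
          rw [hveq, abs_mul]
          rcases eq_or_lt_of_le (abs_nonneg d) with hd0 | hd0
          · rw [← hd0]; simpa using hδ'
          · calc |d| * |ε - ε0| < |d| * (δ' / (|c| + |d| + 1)) :=
                mul_lt_mul_of_pos_left hεd' hd0
              _ ≤ δ' := hcd.2
        exact max_lt h1 h2
      have hcc := hcont hd1
      rw [Real.dist_eq] at hcc ⊢
      calc |fy ξ vε * c - fy y0' v0' * c| = |fy ξ vε - fy y0' v0'| * |c| := by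
            rw [← abs_mul]; ring_nf
        _ < (ε' / (|c| + 1)) * |c| := by
            apply mul_lt_mul_of_pos_right _ hc1
            simpa [Real.dist_eq] using hcc
        _ ≤ ε' := by rw [div_mul_eq_mul_div, div_le_iff₀ (by positivity)]; nlinarith
  have := hA.add hB
  refine this.congr_of_eventuallyEq (Filter.Eventually.of_forall fun ε => ?_)
  simp

open Set Metric MeasureTheory intervalIntegral

lemma hasDerivAt_sq_max (u : ℝ) :
    HasDerivAt (fun u : ℝ => max u 0 ^ 2) (2 * max u 0) u := by
  rcases lt_trichotomy u 0 with h | h | h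
  · have hev : (fun u : ℝ => max u 0 ^ 2) =ᶠ[nhds u] fun _ => (0:ℝ) := by
      filter_upwards [Iio_mem_nhds h] with x hx
      simp [max_eq_right (le_of_lt (mem_Iio.mp hx))]
    rw [max_eq_right h.le, mul_zero]
    exact (hasDerivAt_const u (0:ℝ)).congr_of_eventuallyEq hev
  · subst h
    rw [max_self, mul_zero, hasDerivAt_iff_isLittleO, Asymptotics.isLittleO_iff]
    intro c hc
    filter_upwards [Metric.ball_mem_nhds (0:ℝ) hc] with x hx
    have hx' : |x| < c := by simpa [Real.dist_eq] using hx
    have h1 : |max x 0| ≤ |x| := by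
      rcases le_total x 0 with h' | h'
      · rw [max_eq_right h']; simpa using abs_nonneg x
      · rw [max_eq_left h']
    simp only [max_self, smul_zero, sub_zero, Real.norm_eq_abs]
    norm_num
    nlinarith [abs_nonneg (max x 0), abs_nonneg x, sq_abs (max x 0)]
  · have hev : (fun u : ℝ => max u 0 ^ 2) =ᶠ[nhds u] fun u => u ^ 2 := by
      filter_upwards [Ioi_mem_nhds h] with x hx
      simp [max_eq_left (le_of_lt (mem_Ioi.mp hx))]
    rw [max_eq_left h.le]
    have : HasDerivAt (fun u : ℝ => u ^ 2) (2 * u) u := by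
      simpa using hasDerivAt_pow 2 u
    exact this.congr_of_eventuallyEq hev

lemma hasDerivAt_eta (a r : ℝ) (hr : 0 < r) (t : ℝ) :
    HasDerivAt (fun t : ℝ => max (1 - (t - a) / r) 0 ^ 2)
      (2 * max (1 - (t - a) / r) 0 * (-(1 / r))) t := by
  have hg : HasDerivAt (fun t : ℝ => 1 - (t - a) / r) (-(1 / r)) t := by
    have := (((hasDerivAt_id t).sub_const a).div_const r).const_sub 1
    simpa using this
  exact (hasDerivAt_sq_max _).comp t hg

/-- First variation of an integral functional. -/
lemma first_variation
    (a b : ℝ) (hab : a < b)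
    (f fy fv : ℝ → ℝ → ℝ → ℝ)
    (hf_cont : ContinuousOn (fun p : ℝ × ℝ × ℝ => f p.1 p.2.1 p.2.2)
      (Set.Icc a b ×ˢ (Set.univ : Set ℝ) ×ˢ (Set.univ : Set ℝ)))
    (hfy : ∀ t ∈ Set.Icc a b, ∀ y v : ℝ, HasDerivAt (fun y' => f t y' v) (fy t y v) y)
    (hfv : ∀ t ∈ Set.Icc a b, ∀ y v : ℝ, HasDerivAt (fun v' => f t y v') (fv t y v) v)
    (hfy_cont : ContinuousOn (fun p : ℝ × ℝ × ℝ => fy p.1 p.2.1 p.2.2)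
      (Set.Icc a b ×ˢ (Set.univ : Set ℝ) ×ˢ (Set.univ : Set ℝ)))
    (hfv_cont : ContinuousOn (fun p : ℝ × ℝ × ℝ => fv p.1 p.2.1 p.2.2)
      (Set.Icc a b ×ˢ (Set.univ : Set ℝ) ×ˢ (Set.univ : Set ℝ)))
    (u w : ℝ → ℝ) (hu : ContinuousOn u (Set.Icc a b)) (hw : ContinuousOn w (Set.Icc a b))
    (η η' : ℝ → ℝ) (hη : ∀ t, HasDerivAt η (η' t) t) (hη'c : Continuous η') :
    HasDerivAt (fun ε => ∫ t in a..b, f t (u t + ε * η t) (w t + ε * η' t))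
      (∫ t in a..b, fy t (u t) (w t) * η t + fv t (u t) (w t) * η' t) 0 := by
  have hηc : Continuous η := by
    rw [continuous_iff_continuousAt]; exact fun t => (hη t).continuousAt
  have hIoc : Set.uIoc a b = Set.Ioc a b := uIoc_of_le hab.le
  have hIccsub : Set.Ioc a b ⊆ Set.Icc a b := Set.Ioc_subset_Icc_self
  -- continuity of the composed integrands
  have hinner : ∀ ε : ℝ, ContinuousOn (fun t => (t, u t + ε * η t, w t + ε * η' t))
      (Set.Icc a b) := fun ε =>
    continuousOn_id.prodMk ((hu.add (continuous_const.mul hηc).continuousOn).prodMk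
      (hw.add (continuous_const.mul hη'c).continuousOn))
  have hmaps : ∀ ε : ℝ, MapsTo (fun t => (t, u t + ε * η t, w t + ε * η' t)) (Set.Icc a b)
      (Set.Icc a b ×ˢ (Set.univ : Set ℝ) ×ˢ (Set.univ : Set ℝ)) := by
    intro ε t ht
    simp [Set.mem_prod, ht]
  have hFc : ∀ ε : ℝ, ContinuousOn (fun t => f t (u t + ε * η t) (w t + ε * η' t))
      (Set.Icc a b) := fun ε => hf_cont.comp (hinner ε) (hmaps ε)
  have hFyc : ∀ ε : ℝ, ContinuousOn (fun t => fy t (u t + ε * η t) (w t + ε * η' t))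
      (Set.Icc a b) := fun ε => hfy_cont.comp (hinner ε) (hmaps ε)
  have hFvc : ∀ ε : ℝ, ContinuousOn (fun t => fv t (u t + ε * η t) (w t + ε * η' t))
      (Set.Icc a b) := fun ε => hfv_cont.comp (hinner ε) (hmaps ε)
  -- compact bounds
  have hΨ : ContinuousOn (fun q : ℝ × ℝ => (q.1, u q.1 + q.2 * η q.1, w q.1 + q.2 * η' q.1))
      (Set.Icc a b ×ˢ Set.Icc (-1 : ℝ) 1) := by
    apply ContinuousOn.prodMk
    · exact continuous_fst.continuousOn
    apply ContinuousOn.prodMk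
    · exact ((hu.comp continuous_fst.continuousOn (fun q hq => hq.1)).add
        (continuous_snd.mul (hηc.comp continuous_fst)).continuousOn)
    · exact ((hw.comp continuous_fst.continuousOn (fun q hq => hq.1)).add
        (continuous_snd.mul (hη'c.comp continuous_fst)).continuousOn)
  set K : Set (ℝ × ℝ × ℝ) :=
    (fun q : ℝ × ℝ => (q.1, u q.1 + q.2 * η q.1, w q.1 + q.2 * η' q.1)) ''
      (Set.Icc a b ×ˢ Set.Icc (-1 : ℝ) 1) with hK
  have hKcomp : IsCompact K := (isCompact_Icc.prod isCompact_Icc).image_of_continuousOn hΨ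
  have hKsub : K ⊆ Set.Icc a b ×ˢ (Set.univ : Set ℝ) ×ˢ (Set.univ : Set ℝ) := by
    rintro p ⟨q, hq, rfl⟩
    exact ⟨hq.1, ⟨trivial, trivial⟩⟩
  obtain ⟨C1, hC1⟩ := hKcomp.exists_bound_of_continuousOn (hfy_cont.mono hKsub)
  obtain ⟨C2, hC2⟩ := hKcomp.exists_bound_of_continuousOn (hfv_cont.mono hKsub)
  obtain ⟨B1, hB1⟩ := isCompact_Icc.exists_bound_of_continuousOn hηc.continuousOn
  obtain ⟨B2, hB2⟩ := isCompact_Icc.exists_bound_of_continuousOn hη'c.continuousOn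
  set C1' := max C1 0; set C2' := max C2 0; set B1' := max B1 0; set B2' := max B2 0
  have hC1'0 : (0:ℝ) ≤ C1' := le_max_right _ _
  have hC2'0 : (0:ℝ) ≤ C2' := le_max_right _ _
  have hmemK : ∀ t ∈ Set.Ioc a b, ∀ x ∈ ball (0:ℝ) 1,
      (t, u t + x * η t, w t + x * η' t) ∈ K := by
    intro t ht x hx
    exact ⟨(t, x), ⟨hIccsub ht, by
      constructor <;> [linarith [abs_lt.mp (by simpa [Real.dist_eq] using hx) |>.1];
        linarith [abs_lt.mp (by simpa [Real.dist_eq] using hx) |>.2]]⟩, rfl⟩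
  have key := intervalIntegral.hasDerivAt_integral_of_dominated_loc_of_deriv_le
    (F := fun ε t => f t (u t + ε * η t) (w t + ε * η' t))
    (F' := fun ε t => fy t (u t + ε * η t) (w t + ε * η' t) * η t
      + fv t (u t + ε * η t) (w t + ε * η' t) * η' t)
    (x₀ := (0:ℝ)) (bound := fun _ => C1' * B1' + C2' * B2')
    (μ := volume) (a := a) (b := b)
    (Metric.ball_mem_nhds (0:ℝ) one_pos)
    (Filter.Eventually.of_forall fun ε => by
      rw [hIoc]
      exact ((hFc ε).mono hIccsub).aestronglyMeasurable measurableSet_Ioc)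
    (((hFc 0).mono (by rw [uIcc_of_le hab.le])).intervalIntegrable)
    (by
      rw [hIoc]
      exact ((((hFyc 0).mul hηc.continuousOn).add
        ((hFvc 0).mul hη'c.continuousOn)).mono hIccsub).aestronglyMeasurable measurableSet_Ioc)
    (Filter.Eventually.of_forall (by
      intro t ht x hx
      rw [hIoc] at ht
      have hmem := hmemK t ht x hx
      have h1 : |fy t (u t + x * η t) (w t + x * η' t)| ≤ C1' :=
        (hC1 _ hmem).trans (le_max_left _ _)
      have h2 : |fv t (u t + x * η t) (w t + x * η' t)| ≤ C2' :=
        (hC2 _ hmem).trans (le_max_left _ _)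
      have h3 : |η t| ≤ B1' := (hB1 t (hIccsub ht)).trans (le_max_left _ _)
      have h4 : |η' t| ≤ B2' := (hB2 t (hIccsub ht)).trans (le_max_left _ _)
      calc ‖fy t (u t + x * η t) (w t + x * η' t) * η t
            + fv t (u t + x * η t) (w t + x * η' t) * η' t‖
          ≤ |fy t (u t + x * η t) (w t + x * η' t) * η t|
            + |fv t (u t + x * η t) (w t + x * η' t) * η' t| := abs_add_le _ _
        _ ≤ C1' * B1' + C2' * B2' := by
            rw [abs_mul, abs_mul]
            exact add_le_add (mul_le_mul h1 h3 (abs_nonneg _) hC1'0)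
              (mul_le_mul h2 h4 (abs_nonneg _) hC2'0)))
    (intervalIntegrable_const)
    (Filter.Eventually.of_forall (by
      intro t ht x hx
      rw [hIoc] at ht
      have ht' : t ∈ Set.Icc a b := hIccsub ht
      have hcont : ContinuousAt (fun p : ℝ × ℝ => fy t p.1 p.2) (u t + x * η t, w t + x * η' t) := by
        have hmt : MapsTo (fun p : ℝ × ℝ => (t, p)) (Set.univ : Set (ℝ × ℝ))
            (Set.Icc a b ×ˢ (Set.univ : Set ℝ) ×ˢ (Set.univ : Set ℝ)) := by
          intro p _
          exact ⟨ht', ⟨trivial, trivial⟩⟩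
        have := hfy_cont.comp ((continuous_const.prodMk continuous_id).continuousOn) hmt
        have h2 : Continuous (fun p : ℝ × ℝ => fy t p.1 p.2) :=
          continuousOn_univ.mp this
        exact h2.continuousAt
      exact hasDerivAt_line (hfy t ht') (hfv t ht' (u t + x * η t) (w t + x * η' t)) hcont))
  have hF'0 : (fun t => fy t (u t) (w t) * η t + fv t (u t) (w t) * η' t)
      = fun t => fy t (u t + (0:ℝ) * η t) (w t + (0:ℝ) * η' t) * η t
        + fv t (u t + (0:ℝ) * η t) (w t + (0:ℝ) * η' t) * η' t := by
    funext t; norm_num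
  rw [hF'0]
  exact key.2

/-- Natural boundary condition at `a` for the quotient functional
`L[x] = F₁[x] / F₂[x]` when `x(a)` is free and `x(b) = x_b` is fixed. -/
theorem quotient_natural_boundary_left
    (a b : ℝ) (hab : a < b)
    (f1 f1y f1v f2 f2y f2v : ℝ → ℝ → ℝ → ℝ)
    (hf1_cont : ContinuousOn (fun p : ℝ × ℝ × ℝ => f1 p.1 p.2.1 p.2.2)
      (Set.Icc a b ×ˢ (Set.univ : Set ℝ) ×ˢ (Set.univ : Set ℝ)))
    (hf2_cont : ContinuousOn (fun p : ℝ × ℝ × ℝ => f2 p.1 p.2.1 p.2.2)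
      (Set.Icc a b ×ˢ (Set.univ : Set ℝ) ×ˢ (Set.univ : Set ℝ)))
    (hf1y : ∀ t ∈ Set.Icc a b, ∀ y v : ℝ,
      HasDerivAt (fun y' => f1 t y' v) (f1y t y v) y)
    (hf1v : ∀ t ∈ Set.Icc a b, ∀ y v : ℝ,
      HasDerivAt (fun v' => f1 t y v') (f1v t y v) v)
    (hf2y : ∀ t ∈ Set.Icc a b, ∀ y v : ℝ,
      HasDerivAt (fun y' => f2 t y' v) (f2y t y v) y)
    (hf2v : ∀ t ∈ Set.Icc a b, ∀ y v : ℝ,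
      HasDerivAt (fun v' => f2 t y v') (f2v t y v) v)
    (hf1y_cont : ContinuousOn (fun p : ℝ × ℝ × ℝ => f1y p.1 p.2.1 p.2.2)
      (Set.Icc a b ×ˢ (Set.univ : Set ℝ) ×ˢ (Set.univ : Set ℝ)))
    (hf1v_cont : ContinuousOn (fun p : ℝ × ℝ × ℝ => f1v p.1 p.2.1 p.2.2)
      (Set.Icc a b ×ˢ (Set.univ : Set ℝ) ×ˢ (Set.univ : Set ℝ)))
    (hf2y_cont : ContinuousOn (fun p : ℝ × ℝ × ℝ => f2y p.1 p.2.1 p.2.2)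
      (Set.Icc a b ×ˢ (Set.univ : Set ℝ) ×ˢ (Set.univ : Set ℝ)))
    (hf2v_cont : ContinuousOn (fun p : ℝ × ℝ × ℝ => f2v p.1 p.2.1 p.2.2)
      (Set.Icc a b ×ˢ (Set.univ : Set ℝ) ×ˢ (Set.univ : Set ℝ)))
    (xb : ℝ) (xE : ℝ → ℝ)
    (hxE : ContDiffOn ℝ 1 xE (Set.Icc a b))
    (hxEb : xE b = xb)
    (F1 F2 : (ℝ → ℝ) → ℝ)
    (hF1 : ∀ x, F1 x = ∫ t in a..b, f1 t (x t) (derivWithin x (Set.Icc a b) t))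
    (hF2 : ∀ x, F2 x = ∫ t in a..b, f2 t (x t) (derivWithin x (Set.Icc a b) t))
    (hF2ne : ∀ x : ℝ → ℝ, ContDiffOn ℝ 1 x (Set.Icc a b) → x b = xb → F2 x ≠ 0)
    (L : (ℝ → ℝ) → ℝ)
    (hL : ∀ x, L x = F1 x / F2 x)
    (hext :
      (∃ δ > 0, ∀ x : ℝ → ℝ, ContDiffOn ℝ 1 x (Set.Icc a b) →
        x b = xb → C1Norm a b (fun t => x t - xE t) < δ → L xE ≤ L x) ∨
      (∃ δ > 0, ∀ x : ℝ → ℝ, ContDiffOn ℝ 1 x (Set.Icc a b) →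
        x b = xb → C1Norm a b (fun t => x t - xE t) < δ → L x ≤ L xE)) :
    f1v a (xE a) (derivWithin xE (Set.Icc a b) a) -
      (F1 xE / F2 xE) * f2v a (xE a) (derivWithin xE (Set.Icc a b) a) = 0 := by
  have hsU : UniqueDiffOn ℝ (Set.Icc a b) := uniqueDiffOn_Icc hab
  have haI : a ∈ Set.Icc a b := ⟨le_refl a, hab.le⟩
  set xE' := derivWithin xE (Set.Icc a b) with hxE'def
  have hxEc : ContinuousOn xE (Set.Icc a b) := hxE.continuousOn
  have hxE'c : ContinuousOn xE' (Set.Icc a b) := hxE.continuousOn_derivWithin hsU le_rfl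
  set Q := F1 xE / F2 xE with hQ
  set α : ℝ → ℝ := fun t => f1y t (xE t) (xE' t) - Q * f2y t (xE t) (xE' t) with hα
  set β : ℝ → ℝ := fun t => f1v t (xE t) (xE' t) - Q * f2v t (xE t) (xE' t) with hβ
  have hinner : ContinuousOn (fun t => (t, xE t, xE' t)) (Set.Icc a b) :=
    continuousOn_id.prodMk (hxEc.prodMk hxE'c)
  have hmapsI : Set.MapsTo (fun t => (t, xE t, xE' t)) (Set.Icc a b)
      (Set.Icc a b ×ˢ (Set.univ : Set ℝ) ×ˢ (Set.univ : Set ℝ)) := by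
    intro t ht; simp [Set.mem_prod, ht]
  have hαc : ContinuousOn α (Set.Icc a b) := by
    rw [hα]
    exact (hf1y_cont.comp hinner hmapsI).sub
      (continuousOn_const.mul (hf2y_cont.comp hinner hmapsI))
  have hβc : ContinuousOn β (Set.Icc a b) := by
    rw [hβ]
    exact (hf1v_cont.comp hinner hmapsI).sub
      (continuousOn_const.mul (hf2v_cont.comp hinner hmapsI))
  have hF2xE : F2 xE ≠ 0 := hF2ne xE hxE hxEb
  -- the variational identity
  have hvar : ∀ η η' : ℝ → ℝ, (∀ t, HasDerivAt η (η' t) t) → Continuous η' → η b = 0 →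
      ∫ t in a..b, (α t * η t + β t * η' t) = 0 := by
    intro η η' hη hη'c hηb
    have hηc : Continuous η := by
      rw [continuous_iff_continuousAt]; exact fun t => (hη t).continuousAt
    have hηcd : ContDiff ℝ 1 η := contDiff_one_iff_deriv.mpr
      ⟨fun t => (hη t).differentiableAt,
        by rw [show deriv η = η' from funext fun t => (hη t).deriv]; exact hη'c⟩
    set X : ℝ → ℝ → ℝ := fun ε t => xE t + ε * η t with hX
    have hXcd : ∀ ε, ContDiffOn ℝ 1 (X ε) (Set.Icc a b) :=
      fun ε => hxE.add ((contDiff_const.mul hηcd).contDiffOn)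
    have hXb : ∀ ε, X ε b = xb := fun ε => by simp [hX, hηb, hxEb]
    have hXder : ∀ ε : ℝ, ∀ t ∈ Set.Icc a b,
        derivWithin (X ε) (Set.Icc a b) t = xE' t + ε * η' t := by
      intro ε t ht
      have h1 : HasDerivWithinAt xE (xE' t) (Set.Icc a b) t :=
        (hxE.differentiableOn one_ne_zero t ht).hasDerivWithinAt
      have h2 : HasDerivWithinAt (fun t => ε * η t) (ε * η' t) (Set.Icc a b) t :=
        ((hη t).const_mul ε).hasDerivWithinAt
      exact (h1.add h2).derivWithin (hsU t ht)
    have hF1X : ∀ ε : ℝ,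
        F1 (X ε) = ∫ t in a..b, f1 t (xE t + ε * η t) (xE' t + ε * η' t) := by
      intro ε
      rw [hF1]
      apply intervalIntegral.integral_congr
      intro t ht
      rw [Set.uIcc_of_le hab.le] at ht
      simp only [hX]
      rw [hXder ε t ht]
    have hF2X : ∀ ε : ℝ,
        F2 (X ε) = ∫ t in a..b, f2 t (xE t + ε * η t) (xE' t + ε * η' t) := by
      intro ε
      rw [hF2]
      apply intervalIntegral.integral_congr
      intro t ht
      rw [Set.uIcc_of_le hab.le] at ht
      simp only [hX]
      rw [hXder ε t ht]
    have hΦ1 : HasDerivAt (fun ε => F1 (X ε))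
        (∫ t in a..b, f1y t (xE t) (xE' t) * η t + f1v t (xE t) (xE' t) * η' t) 0 := by
      have heq : (fun ε => F1 (X ε))
          = fun ε => ∫ t in a..b, f1 t (xE t + ε * η t) (xE' t + ε * η' t) := funext hF1X
      rw [heq]
      exact first_variation a b hab f1 f1y f1v hf1_cont hf1y hf1v hf1y_cont hf1v_cont
        xE xE' hxEc hxE'c η η' hη hη'c
    have hΦ2 : HasDerivAt (fun ε => F2 (X ε))
        (∫ t in a..b, f2y t (xE t) (xE' t) * η t + f2v t (xE t) (xE' t) * η' t) 0 := by
      have heq : (fun ε => F2 (X ε))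
          = fun ε => ∫ t in a..b, f2 t (xE t + ε * η t) (xE' t + ε * η' t) := funext hF2X
      rw [heq]
      exact first_variation a b hab f2 f2y f2v hf2_cont hf2y hf2v hf2y_cont hf2v_cont
        xE xE' hxEc hxE'c η η' hη hη'c
    have hX0 : X 0 = xE := by funext t; simp [hX]
    have hΦ := hΦ1.div hΦ2 (by rw [hX0]; exact hF2xE)
    rw [hX0] at hΦ
    -- local extremum of ε ↦ L (X ε) at 0
    obtain ⟨B1, hB1⟩ := isCompact_Icc.exists_bound_of_continuousOn
      (hηc.continuousOn : ContinuousOn η (Set.Icc a b))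
    obtain ⟨B2, hB2⟩ := isCompact_Icc.exists_bound_of_continuousOn
      (hη'c.continuousOn : ContinuousOn η' (Set.Icc a b))
    haveI : Nonempty (Set.Icc a b) := ⟨⟨a, haI⟩⟩
    have hnorm : ∀ ε : ℝ, C1Norm a b (fun t => X ε t - xE t)
        ≤ |ε| * (max B1 0 + max B2 0) := by
      intro ε
      have hfun : (fun t => X ε t - xE t) = fun t => ε * η t := by
        funext t; simp [hX]
      rw [hfun, C1Norm]
      have hs1 : (⨆ t : Set.Icc a b, |ε * η t|) ≤ |ε| * max B1 0 :=
        ciSup_le fun t => by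
          rw [abs_mul]
          exact mul_le_mul_of_nonneg_left ((hB1 t t.2).trans (le_max_left _ _)) (abs_nonneg ε)
      have hs2 : (⨆ t : Set.Icc a b, |derivWithin (fun t => ε * η t) (Set.Icc a b) t|)
          ≤ |ε| * max B2 0 := by
        apply ciSup_le
        intro t
        rw [((hη t).const_mul ε).hasDerivWithinAt.derivWithin (hsU t t.2), abs_mul]
        exact mul_le_mul_of_nonneg_left ((hB2 t t.2).trans (le_max_left _ _)) (abs_nonneg ε)
      calc _ ≤ |ε| * max B1 0 + |ε| * max B2 0 := add_le_add hs1 hs2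
        _ = |ε| * (max B1 0 + max B2 0) := by ring
    set M : ℝ := max B1 0 + max B2 0 with hM
    have hM0 : 0 ≤ M := by positivity
    have hsmall : ∀ δ : ℝ, 0 < δ → ∀ ε : ℝ, |ε| < δ / (M + 1) →
        C1Norm a b (fun t => X ε t - xE t) < δ := by
      intro δ hδ ε hε
      calc C1Norm a b (fun t => X ε t - xE t) ≤ |ε| * M := hnorm ε
        _ ≤ |ε| * (M + 1) := by nlinarith [abs_nonneg ε]
        _ < δ / (M + 1) * (M + 1) := by
            apply mul_lt_mul_of_pos_right hε; linarith
        _ = δ := by field_simp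
    have hder0 : (∫ t in a..b, f1y t (xE t) (xE' t) * η t + f1v t (xE t) (xE' t) * η' t)
          * F2 xE
        - F1 xE * ∫ t in a..b, f2y t (xE t) (xE' t) * η t + f2v t (xE t) (xE' t) * η' t
        = 0 := by
      have hLX : ∀ ε : ℝ, L (X ε) = F1 (X ε) / F2 (X ε) := fun ε => hL (X ε)
      rcases hext with ⟨δ, hδ, hmin⟩ | ⟨δ, hδ, hmax⟩
      · have hloc : IsLocalMin (fun ε => F1 (X ε) / F2 (X ε)) 0 := by
          have hr0 : 0 < δ / (M + 1) := by positivity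
          refine Filter.eventually_of_mem (Metric.ball_mem_nhds (0:ℝ) hr0) ?_
          intro ε hε
          have hε' : |ε| < δ / (M + 1) := by simpa [Real.dist_eq] using hε
          have := hmin (X ε) (hXcd ε) (hXb ε) (hsmall δ hδ ε hε')
          rw [hL, hL] at this
          simpa [hX0] using this
        have := hloc.hasDerivAt_eq_zero hΦ
        rcases div_eq_zero_iff.mp this with h | h
        · exact h
        · exact absurd (pow_eq_zero_iff (by norm_num)|>.mp h) hF2xE
      · have hloc : IsLocalMax (fun ε => F1 (X ε) / F2 (X ε)) 0 := by
          have hr0 : 0 < δ / (M + 1) := by positivity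
          refine Filter.eventually_of_mem (Metric.ball_mem_nhds (0:ℝ) hr0) ?_
          intro ε hε
          have hε' : |ε| < δ / (M + 1) := by simpa [Real.dist_eq] using hε
          have := hmax (X ε) (hXcd ε) (hXb ε) (hsmall δ hδ ε hε')
          rw [hL, hL] at this
          simpa [hX0] using this
        have := hloc.hasDerivAt_eq_zero hΦ
        rcases div_eq_zero_iff.mp this with h | h
        · exact h
        · exact absurd (pow_eq_zero_iff (by norm_num)|>.mp h) hF2xE
    -- convert to the integral identity
    have hg1int : IntervalIntegrable
        (fun t => f1y t (xE t) (xE' t) * η t + f1v t (xE t) (xE' t) * η' t) volume a b := by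
      apply ContinuousOn.intervalIntegrable
      rw [Set.uIcc_of_le hab.le]
      exact ((hf1y_cont.comp hinner hmapsI).mul hηc.continuousOn).add
        ((hf1v_cont.comp hinner hmapsI).mul hη'c.continuousOn)
    have hg2int : IntervalIntegrable
        (fun t => f2y t (xE t) (xE' t) * η t + f2v t (xE t) (xE' t) * η' t) volume a b := by
      apply ContinuousOn.intervalIntegrable
      rw [Set.uIcc_of_le hab.le]
      exact ((hf2y_cont.comp hinner hmapsI).mul hηc.continuousOn).add
        ((hf2v_cont.comp hinner hmapsI).mul hη'c.continuousOn)
    have hintg : (fun t => α t * η t + β t * η' t)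
        = fun t => (f1y t (xE t) (xE' t) * η t + f1v t (xE t) (xE' t) * η' t)
          - Q * (f2y t (xE t) (xE' t) * η t + f2v t (xE t) (xE' t) * η' t) := by
      funext t; simp only [hα, hβ]; ring
    rw [hintg, intervalIntegral.integral_sub hg1int (hg2int.const_mul Q),
      intervalIntegral.integral_const_mul]
    rw [hQ]
    field_simp
    linarith [hder0]
  -- Part B : extract the boundary value
  have hβa : β a = 0 := by
    by_contra hne
    obtain ⟨Cα, hCα⟩ := isCompact_Icc.exists_bound_of_continuousOn hαc
    set Cα' := max Cα 0 with hCα'def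
    have hCα'0 : (0:ℝ) ≤ Cα' := le_max_right _ _
    have hCα' : ∀ t ∈ Set.Icc a b, |α t| ≤ Cα' := fun t ht => (hCα t ht).trans (le_max_left _ _)
    set ε : ℝ := |β a| / 2 with hεdef
    have hε0 : 0 < ε := by
      rw [hεdef]
      have := abs_pos.mpr hne
      linarith
    have hβa_cont : ContinuousWithinAt β (Set.Icc a b) a := hβc a haI
    obtain ⟨δ', hδ', hδ'prop⟩ := Metric.continuousWithinAt_iff.mp hβa_cont (ε/3) (by positivity)
    set r : ℝ := min δ' (min (b - a) (ε / (3 * (Cα' + 1)))) with hrdef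
    have hr0 : 0 < r := lt_min hδ' (lt_min (by linarith) (by positivity))
    have hrba : r ≤ b - a := (min_le_right _ _).trans (min_le_left _ _)
    have hrδ' : r ≤ δ' := min_le_left _ _
    have hrε : Cα' * r ≤ ε/3 := by
      have h1 : r ≤ ε / (3 * (Cα' + 1)) := (min_le_right _ _).trans (min_le_right _ _)
      calc Cα' * r ≤ (Cα' + 1) * (ε / (3 * (Cα' + 1))) :=
            mul_le_mul (by linarith) h1 hr0.le (by linarith)
        _ = ε/3 := by field_simp
    set η : ℝ → ℝ := fun t => max (1 - (t - a) / r) 0 ^ 2 with hηdef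
    set η' : ℝ → ℝ := fun t => 2 * max (1 - (t - a) / r) 0 * (-(1 / r)) with hη'def
    have hη : ∀ t, HasDerivAt η (η' t) t := fun t => hasDerivAt_eta a r hr0 t
    have hηc : Continuous η := by
      rw [continuous_iff_continuousAt]; exact fun t => (hη t).continuousAt
    have hη'c : Continuous η' := by
      rw [hη'def]
      exact (continuous_const.mul ((continuous_const.sub
        ((continuous_id.sub continuous_const).div_const r)).max continuous_const)).mul
        continuous_const
    have hηb : η b = 0 := by
      have h1 : 1 - (b - a)/r ≤ 0 := by
        rw [sub_nonpos, le_div_iff₀ hr0]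
        linarith
      simp [hηdef, max_eq_right h1]
    have hηa : η a = 1 := by simp [hηdef]
    have hη01 : ∀ t, a ≤ t → 0 ≤ η t ∧ η t ≤ 1 := by
      intro t ht
      have h1 : max (1 - (t-a)/r) 0 ≤ 1 := by
        apply max_le _ zero_le_one
        have : 0 ≤ (t-a)/r := div_nonneg (by linarith) hr0.le
        linarith
      constructor
      · simp only [hηdef]; positivity
      · calc η t = max (1 - (t-a)/r) 0 ^ 2 := rfl
          _ ≤ 1 ^ 2 := pow_le_pow_left₀ (le_max_right _ _) h1 2
          _ = 1 := one_pow 2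
    have hηzero : ∀ t, a + r ≤ t → η t = 0 := by
      intro t ht
      have h1 : 1 - (t-a)/r ≤ 0 := by rw [sub_nonpos, le_div_iff₀ hr0]; linarith
      simp [hηdef, max_eq_right h1]
    have hη'zero : ∀ t, a + r ≤ t → η' t = 0 := by
      intro t ht
      have h1 : 1 - (t-a)/r ≤ 0 := by rw [sub_nonpos, le_div_iff₀ hr0]; linarith
      simp [hη'def, max_eq_right h1]
    have hη'nonpos : ∀ t, η' t ≤ 0 := by
      intro t
      simp only [hη'def]
      have h1 : 0 ≤ max (1 - (t-a)/r) 0 := le_max_right _ _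
      have h2 : (0:ℝ) < 1/r := by positivity
      nlinarith
    -- integrability facts
    have hintαη : IntervalIntegrable (fun t => α t * η t) volume a b := by
      apply ContinuousOn.intervalIntegrable
      rw [Set.uIcc_of_le hab.le]
      exact hαc.mul hηc.continuousOn
    have hintβη' : IntervalIntegrable (fun t => β t * η' t) volume a b := by
      apply ContinuousOn.intervalIntegrable
      rw [Set.uIcc_of_le hab.le]
      exact hβc.mul hη'c.continuousOn
    have hintA : IntervalIntegrable (fun t => (β t - β a) * η' t) volume a b := by
      apply ContinuousOn.intervalIntegrable
      rw [Set.uIcc_of_le hab.le]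
      exact (hβc.sub continuousOn_const).mul hη'c.continuousOn
    have hintB : IntervalIntegrable (fun t => β a * η' t) volume a b :=
      (continuous_const.mul hη'c).intervalIntegrable a b
    -- FTC
    have hFTC : (∫ t in a..b, η' t) = -1 := by
      rw [intervalIntegral.integral_eq_sub_of_hasDerivAt (fun t _ => hη t)
        (hη'c.intervalIntegrable a b), hηb, hηa]
      norm_num
    -- the variational identity, split
    have hid := hvar η η' hη hη'c hηb
    have hsplit0 : (∫ t in a..b, (α t * η t + β t * η' t))
        = (∫ t in a..b, α t * η t) + ∫ t in a..b, β t * η' t :=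
      intervalIntegral.integral_add hintαη hintβη'
    have hβdec : (∫ t in a..b, β t * η' t)
        = (∫ t in a..b, (β t - β a) * η' t) + β a * ∫ t in a..b, η' t := by
      have heq : (fun t => β t * η' t) = fun t => ((β t - β a) * η' t + β a * η' t) := by
        funext t; ring
      rw [heq, intervalIntegral.integral_add hintA hintB,
        intervalIntegral.integral_const_mul]
    -- estimate 1
    have hest1 : |∫ t in a..b, (β t - β a) * η' t| ≤ ε/3 := by
      have hbound : ∀ t ∈ Set.uIoc a b, ‖(β t - β a) * η' t‖ ≤ (ε/3) * (-η' t) := by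
        intro t ht
        rw [Set.uIoc_of_le hab.le] at ht
        rcases eq_or_ne (η' t) 0 with h0 | h0
        · simp [h0]
        · have htr : t < a + r := by
            by_contra hge
            exact h0 (hη'zero t (by linarith))
          have htmem : t ∈ Set.Icc a b := Set.Ioc_subset_Icc_self ht
          have hdist : dist t a < δ' := by
            rw [Real.dist_eq, abs_of_pos (by linarith [ht.1] : (0:ℝ) < t - a)]
            linarith [ht.1]
          have hβd := hδ'prop htmem hdist
          rw [Real.dist_eq] at hβd
          have habs : |η' t| = -η' t := abs_of_nonpos (hη'nonpos t)
          rw [Real.norm_eq_abs, abs_mul, habs]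
          exact mul_le_mul_of_nonneg_right hβd.le (by linarith [hη'nonpos t])
      have hgint : IntervalIntegrable (fun t => (ε/3) * (-η' t)) volume a b :=
        (continuous_const.mul hη'c.neg).intervalIntegrable a b
      have hnile := intervalIntegral.norm_integral_le_of_norm_le hab.le
        (Filter.Eventually.of_forall fun t ht => hbound t (by rwa [Set.uIoc_of_le hab.le])) hgint
      have hgval : (∫ t in a..b, (ε/3) * (-η' t)) = ε/3 := by
        rw [intervalIntegral.integral_const_mul]
        have hneg : (∫ t in a..b, -η' t) = 1 := by
          rw [intervalIntegral.integral_neg, hFTC]; norm_num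
        rw [hneg, mul_one]
      rw [Real.norm_eq_abs] at hnile
      calc |∫ t in a..b, (β t - β a) * η' t| ≤ |∫ t in a..b, (ε/3) * (-η' t)| := hnile.trans (le_abs_self _)
        _ = ε/3 := by rw [hgval, abs_of_pos (by positivity)]
    -- estimate 2
    have hest2 : |∫ t in a..b, α t * η t| ≤ ε/3 := by
      have hint_ar : IntervalIntegrable (fun t => α t * η t) volume a (a+r) := by
        apply ContinuousOn.intervalIntegrable
        rw [Set.uIcc_of_le (by linarith)]
        have hsub : Set.Icc a (a+r) ⊆ Set.Icc a b := Set.Icc_subset_Icc le_rfl (by linarith)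
        exact (hαc.mono hsub).mul hηc.continuousOn
      have hint_rb : IntervalIntegrable (fun t => α t * η t) volume (a+r) b := by
        apply ContinuousOn.intervalIntegrable
        rw [Set.uIcc_of_le (by linarith)]
        have hsub : Set.Icc (a+r) b ⊆ Set.Icc a b := Set.Icc_subset_Icc (by linarith) le_rfl
        exact (hαc.mono hsub).mul hηc.continuousOn
      have hsplit : (∫ t in a..b, α t * η t)
          = (∫ t in a..(a+r), α t * η t) + ∫ t in (a+r)..b, α t * η t :=
        (intervalIntegral.integral_add_adjacent_intervals hint_ar hint_rb).symm
      have hz : (∫ t in (a+r)..b, α t * η t) = 0 := by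
        have heq : Set.EqOn (fun t => α t * η t) (fun _ => (0:ℝ)) (Set.uIcc (a+r) b) := by
          intro t ht
          rw [Set.uIcc_of_le (by linarith)] at ht
          simp [hηzero t ht.1]
        rw [intervalIntegral.integral_congr heq]
        simp
      have hfirst : |∫ t in a..(a+r), α t * η t| ≤ Cα' * r := by
        have hb2 : ∀ t ∈ Set.uIoc a (a+r), ‖α t * η t‖ ≤ Cα' := by
          intro t ht
          rw [Set.uIoc_of_le (by linarith)] at ht
          have htI : t ∈ Set.Icc a b := ⟨ht.1.le, by linarith [ht.2]⟩
          rw [Real.norm_eq_abs, abs_mul]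
          have h01 := hη01 t ht.1.le
          calc |α t| * |η t| ≤ Cα' * 1 :=
                mul_le_mul (hCα' t htI) (by rw [abs_of_nonneg h01.1]; exact h01.2)
                  (abs_nonneg _) hCα'0
            _ = Cα' := mul_one _
        have := intervalIntegral.norm_integral_le_of_norm_le_const hb2
        rw [Real.norm_eq_abs] at this
        calc |∫ t in a..(a+r), α t * η t| ≤ Cα' * |a + r - a| := this
          _ = Cα' * r := by rw [show a + r - a = r by ring, abs_of_pos hr0]
      rw [hsplit, hz, add_zero]
      exact hfirst.trans hrε
    -- combine
    rw [hsplit0, hβdec, hFTC] at hid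
    have hβaval : β a = (∫ t in a..b, α t * η t) + ∫ t in a..b, (β t - β a) * η' t := by
      linarith [hid]
    have habs2 : |β a| ≤ ε/3 + ε/3 := by
      rw [hβaval]
      exact (abs_add_le _ _).trans (add_le_add hest2 hest1)
    rw [hεdef] at habs2
    have := abs_pos.mpr hne
    linarith
  simpa [hβ] using hβa
end

section
/- Let a, b ∈ ℤ with b ≥ a + 1, n ≥ 1, H : ℝⁿ → ℝ be continuously differentiable with partial derivatives H'_1, …, H'_n, and for i = 1, …, n and each t ∈ ℤ with a + 1 ≤ t ≤ b let (y, v) ↦ f_i(t, y, v) be a continuously differentiable function from ℝ² to ℝ with partial derivatives f_{iy} and f_{iv}. Suppose x̃ : ℤ → ℝ satisfies x̃(a) = x_a (the value x(b) is not specified), and x̃ is a local extremizer of L[x] = H(F_1[x], …, F_n[x]): there exists δ > 0 such that L[x̃] ≤ L[x] for every x : ℤ → ℝ with x(a) = x_a and |x(t) − x̃(t)| < δ for all integers t with a ≤ t ≤ b (or L[x̃] ≥ L[x] for all such x). Then the natural boundary condition ∑_{i=1}^{n} H'_i(F_1[x̃], …, F_n[x̃]) · f_{iv}(b, x̃(b−1),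 ∇x̃(b)) = 0 holds. -/
/-- Natural boundary condition at `b` on the time scale ℤ for the composite
functional `L[x] = H(F₁[x], …, F_n[x])`, where
`F_i[x] = ∑_{t=a+1}^{b} f_i(t, x(t-1), ∇x(t))` with `∇x(t) = x(t) - x(t-1)`,
when `x(a) = x_a` is fixed and `x(b)` is free. -/
theorem discrete_composite_natural_boundary_right
    (a b : ℤ) (hab : a + 1 ≤ b) (n : ℕ) (hn : 1 ≤ n)
    (H : (Fin n → ℝ) → ℝ) (hH : ContDiff ℝ 1 H)
    (f fy fv : Fin n → ℤ → ℝ → ℝ → ℝ)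
    (hf : ∀ i : Fin n, ∀ t : ℤ, a + 1 ≤ t → t ≤ b →
      ContDiff ℝ 1 (fun p : ℝ × ℝ => f i t p.1 p.2))
    (hfy : ∀ i : Fin n, ∀ t : ℤ, a + 1 ≤ t → t ≤ b → ∀ y v : ℝ,
      HasDerivAt (fun y' => f i t y' v) (fy i t y v) y)
    (hfv : ∀ i : Fin n, ∀ t : ℤ, a + 1 ≤ t → t ≤ b → ∀ y v : ℝ,
      HasDerivAt (fun v' => f i t y v') (fv i t y v) v)
    (xa : ℝ) (xE : ℤ → ℝ)
    (hxEa : xE a = xa)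
    (F : (ℤ → ℝ) → Fin n → ℝ)
    (hF : ∀ x i, F x i = ∑ t ∈ Finset.Icc (a + 1) b, f i t (x (t - 1)) (x t - x (t - 1)))
    (L : (ℤ → ℝ) → ℝ)
    (hL : ∀ x, L x = H (F x))
    (hext :
      (∃ δ > 0, ∀ x : ℤ → ℝ, x a = xa →
        (∀ t : ℤ, a ≤ t → t ≤ b → |x t - xE t| < δ) → L xE ≤ L x) ∨
      (∃ δ > 0, ∀ x : ℤ → ℝ, x a = xa →
        (∀ t : ℤ, a ≤ t → t ≤ b → |x t - xE t| < δ) → L x ≤ L xE)) :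
    ∑ i, fderiv ℝ H (F xE) (Pi.single i 1) *
      fv i b (xE (b - 1)) (xE b - xE (b - 1)) = 0 := by
  classical
  set w : Fin n → ℝ := fun i => fv i b (xE (b - 1)) (xE b - xE (b - 1)) with hw
  set G : ℝ → Fin n → ℝ := fun ε i =>
    (∑ t ∈ (Finset.Icc (a + 1) b).erase b, f i t (xE (t - 1)) (xE t - xE (t - 1))) +
      f i b (xE (b - 1)) (xE b - xE (b - 1) + ε) with hG
  have hbmem : b ∈ Finset.Icc (a + 1) b := by simp [hab]
  have hG0 : G 0 = F xE := by
    funext i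
    rw [hF]
    rw [← Finset.sum_erase_add _ _ hbmem]
    simp [hG]
  have hGF : ∀ ε : ℝ, F (fun t => xE t + if t = b then ε else 0) = G ε := by
    intro ε
    funext i
    rw [hF, ← Finset.sum_erase_add _ _ hbmem]
    have h1 : ∀ t ∈ (Finset.Icc (a + 1) b).erase b,
        f i t ((fun t => xE t + if t = b then ε else 0) (t - 1))
          ((fun t => xE t + if t = b then ε else 0) t -
            (fun t => xE t + if t = b then ε else 0) (t - 1))
        = f i t (xE (t - 1)) (xE t - xE (t - 1)) := by
      intro t ht
      simp only [Finset.mem_erase, Finset.mem_Icc] at ht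
      have h2 : t ≠ b := ht.1
      have h3 : t - 1 ≠ b := by omega
      simp [h2, h3]
    rw [Finset.sum_congr rfl h1]
    have h4 : (b : ℤ) - 1 ≠ b := by omega
    simp only [hG]
    congr 1
    simp [h4]
    ring_nf
  -- derivative of ε ↦ G ε
  have hGderiv : HasDerivAt G w 0 := by
    rw [hasDerivAt_pi]
    intro i
    have h1 : HasDerivAt (fun ε : ℝ => xE b - xE (b - 1) + ε) 1 0 :=
      (hasDerivAt_id (0 : ℝ)).const_add _
    have h2 := (hfv i b hab le_rfl (xE (b - 1)) (xE b - xE (b - 1)))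
    have h3 : HasDerivAt (fun ε : ℝ => f i b (xE (b - 1)) (xE b - xE (b - 1) + ε))
        (w i) 0 := by
      have := HasDerivAt.comp (0 : ℝ) (by simpa using h2) h1
      rw [mul_one] at this
      exact this
    simpa [hG] using h3.const_add (∑ t ∈ (Finset.Icc (a + 1) b).erase b, f i t (xE (t - 1)) (xE t - xE (t - 1)))
  have hHdiff : HasFDerivAt H (fderiv ℝ H (F xE)) (F xE) :=
    ((hH.differentiable one_ne_zero) (F xE)).hasFDerivAt
  have hphi : HasDerivAt (fun ε => H (G ε)) (fderiv ℝ H (F xE) w) 0 := by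
    have hHdiff' : HasFDerivAt H (fderiv ℝ H (F xE)) (G 0) := by rw [hG0]; exact hHdiff
    have := hHdiff'.comp_hasDerivAt 0 hGderiv
    exact this
  -- local extremum gives vanishing derivative
  have hzero : fderiv ℝ H (F xE) w = 0 := by
    have hball : ∀ δ : ℝ, 0 < δ → ∀ᶠ ε : ℝ in nhds 0, |ε| < δ := by
      intro δ hδ
      filter_upwards [Metric.ball_mem_nhds (0 : ℝ) hδ] with ε hε
      simpa [Real.dist_eq] using hε
    have hcond : ∀ ε : ℝ,
        ((fun t => xE t + if t = b then ε else 0) a = xa) ∧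
        (|ε| < 1 → True) := fun ε => ⟨by
          have : a ≠ b := by omega
          simp [this, hxEa], fun _ => trivial⟩
    rcases hext with ⟨δ, hδ, hmin⟩ | ⟨δ, hδ, hmax⟩
    · have hloc : IsLocalMin (fun ε => H (G ε)) 0 := by
        filter_upwards [hball δ hδ] with ε hε
        have h := hmin (fun t => xE t + if t = b then ε else 0)
          (hcond ε).1
          (by intro t _ _; by_cases ht : t = b <;> simp [ht, hε, abs_of_nonneg, hδ])
        have hLx : L (fun t => xE t + if t = b then ε else 0) = H (G ε) := by
          rw [hL, hGF]
        have hLE : L xE = H (G 0) := by rw [hL, hG0]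
        simp only [← hLE, ← hLx]; exact h
      exact hloc.hasDerivAt_eq_zero hphi
    · have hloc : IsLocalMax (fun ε => H (G ε)) 0 := by
        filter_upwards [hball δ hδ] with ε hε
        have h := hmax (fun t => xE t + if t = b then ε else 0)
          (hcond ε).1
          (by intro t _ _; by_cases ht : t = b <;> simp [ht, hε, abs_of_nonneg, hδ])
        have hLx : L (fun t => xE t + if t = b then ε else 0) = H (G ε) := by
          rw [hL, hGF]
        have hLE : L xE = H (G 0) := by rw [hL, hG0]
        simp only [← hLE, ← hLx]; exact h
      exact hloc.hasDerivAt_eq_zero hphi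
  -- decompose w into basis vectors
  have hwsum : w = ∑ i, w i • (Pi.single i (1 : ℝ) : Fin n → ℝ) := by
    rw [← Finset.univ_sum_single w]
    congr 1
    funext i
    rw [← Pi.single_smul]
    simp
  calc ∑ i, fderiv ℝ H (F xE) (Pi.single i 1) * w i
      = fderiv ℝ H (F xE) w := by
        conv_rhs => rw [hwsum, map_sum]
        simp only [map_smul, smul_eq_mul]
        exact Finset.sum_congr rfl fun i _ => mul_comm _ _
  _ = 0 := hzero
end

section
/- Let a, b ∈ ℤ with b ≥ a + 1, n ≥ 1, H : ℝⁿ → ℝ be continuously differentiable with partial derivatives H'_1, …, H'_n, and for i = 1, …, n and each t ∈ ℤ with a + 1 ≤ t ≤ b let (y, v) ↦ f_i(t, y, v) be a continuously differentiable function from ℝ² to ℝ with partial derivatives f_{iy} and f_{iv}. Suppose x̃ : ℤ → ℝ satisfies x̃(b) = x_b (the value x(a) is not specified), and x̃ is a local extremizer of L[x] = H(F_1[x], …, F_n[x]): there exists δ > 0 such that L[x̃] ≤ L[x] for every x : ℤ → ℝ with x(b) = x_b and |x(t) − x̃(t)| < δ for all integers t with a ≤ t ≤ b (or L[x̃] ≥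 L[x] for all such x). Then the natural boundary condition ∑_{i=1}^{n} H'_i(F_1[x̃], …, F_n[x̃]) · ( f_{iy}(a+1, x̃(a), ∇x̃(a+1)) − f_{iv}(a+1, x̃(a), ∇x̃(a+1)) ) = 0 holds. -/
/-- Natural boundary condition at `a` on the time scale ℤ for the composite
functional `L[x] = H(F₁[x], …, F_n[x])`, where
`F_i[x] = ∑_{t=a+1}^{b} f_i(t, x(t-1), ∇x(t))` with `∇x(t) = x(t) - x(t-1)`,
when `x(b) = x_b` is fixed and `x(a)` is free. -/
theorem discrete_composite_natural_boundary_left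
    (a b : ℤ) (hab : a + 1 ≤ b) (n : ℕ) (hn : 1 ≤ n)
    (H : (Fin n → ℝ) → ℝ) (hH : ContDiff ℝ 1 H)
    (f fy fv : Fin n → ℤ → ℝ → ℝ → ℝ)
    (hf : ∀ i : Fin n, ∀ t : ℤ, a + 1 ≤ t → t ≤ b →
      ContDiff ℝ 1 (fun p : ℝ × ℝ => f i t p.1 p.2))
    (hfy : ∀ i : Fin n, ∀ t : ℤ, a + 1 ≤ t → t ≤ b → ∀ y v : ℝ,
      HasDerivAt (fun y' => f i t y' v) (fy i t y v) y)
    (hfv : ∀ i : Fin n, ∀ t : ℤ, a + 1 ≤ t → t ≤ b → ∀ y v : ℝ,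
      HasDerivAt (fun v' => f i t y v') (fv i t y v) v)
    (xb : ℝ) (xE : ℤ → ℝ)
    (hxEb : xE b = xb)
    (F : (ℤ → ℝ) → Fin n → ℝ)
    (hF : ∀ x i, F x i = ∑ t ∈ Finset.Icc (a + 1) b, f i t (x (t - 1)) (x t - x (t - 1)))
    (L : (ℤ → ℝ) → ℝ)
    (hL : ∀ x, L x = H (F x))
    (hext :
      (∃ δ > 0, ∀ x : ℤ → ℝ, x b = xb →
        (∀ t : ℤ, a ≤ t → t ≤ b → |x t - xE t| < δ) → L xE ≤ L x) ∨
      (∃ δ > 0, ∀ x : ℤ → ℝ, x b = xb →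
        (∀ t : ℤ, a ≤ t → t ≤ b → |x t - xE t| < δ) → L x ≤ L xE)) :
    ∑ i, fderiv ℝ H (F xE) (Pi.single i 1) *
      (fy i (a + 1) (xE a) (xE (a + 1) - xE a) -
        fv i (a + 1) (xE a) (xE (a + 1) - xE a)) = 0 := by
  classical
  set ya := xE a with hya
  set va := xE (a + 1) - xE a with hva
  set D := fderiv ℝ H (F xE) with hD
  set w : Fin n → ℝ := fun i => fy i (a+1) ya va - fv i (a+1) ya va with hw
  have hmem : (a+1) ∈ Finset.Icc (a+1) b := by
    rw [Finset.mem_Icc]; omega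
  -- perturbation formula
  have hFup : ∀ v : ℝ, ∀ i, F (Function.update xE a v) i
      = F xE i + (f i (a+1) v (xE (a+1) - v) - f i (a+1) ya va) := by
    intro v i
    rw [hF, hF]
    rw [← Finset.add_sum_erase _ _ hmem, ← Finset.add_sum_erase _ _ hmem]
    have h1 : Function.update xE a v (a+1-1) = v := by
      rw [show a+1-(1:ℤ) = a by ring, Function.update_self]
    have h2 : Function.update xE a v (a+1) = xE (a+1) :=
      Function.update_of_ne (by omega) _ _
    have hrest : ∑ t ∈ (Finset.Icc (a+1) b).erase (a+1),
        f i t (Function.update xE a v (t-1))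
          (Function.update xE a v t - Function.update xE a v (t-1))
        = ∑ t ∈ (Finset.Icc (a+1) b).erase (a+1),
        f i t (xE (t-1)) (xE t - xE (t-1)) := by
      apply Finset.sum_congr rfl
      intro t ht
      rw [Finset.mem_erase, Finset.mem_Icc] at ht
      rw [Function.update_of_ne (by omega), Function.update_of_ne (by omega)]
    rw [hrest, h1, h2, show a+1-(1:ℤ) = a by ring, hya, hva]
    ring
  set Φ : ℝ → Fin n → ℝ :=
    fun ε i => F xE i + (f i (a+1) (ya+ε) (va - ε) - f i (a+1) ya va) with hΦ
  have hΦ0 : Φ 0 = F xE := by funext i; simp [hΦ]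
  -- derivative of each coordinate
  have hder : ∀ i, HasDerivAt (fun ε => Φ ε i) (w i) 0 := by
    intro i
    have hcd := hf i (a+1) le_rfl hab
    have hdiff : DifferentiableAt ℝ (fun p : ℝ×ℝ => f i (a+1) p.1 p.2) (ya, va) :=
      (hcd.differentiable one_ne_zero).differentiableAt
    set Df := fderiv ℝ (fun p : ℝ×ℝ => f i (a+1) p.1 p.2) (ya, va) with hDf
    have hDy : Df (1, 0) = fy i (a+1) ya va := by
      have hcy : HasDerivAt (fun y => ((y, va) : ℝ×ℝ)) (1, 0) ya := by
        simpa using HasDerivAt.prodMk (hasDerivAt_id ya) (hasDerivAt_const ya va)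
      have h1 : HasDerivAt (fun y => f i (a+1) y va) (Df (1,0)) ya :=
        by have := hdiff.hasFDerivAt.comp_hasDerivAt ya hcy; exact this
      exact h1.unique (hfy i (a+1) le_rfl hab ya va)
    have hDv : Df (0, 1) = fv i (a+1) ya va := by
      have hcv : HasDerivAt (fun v => ((ya, v) : ℝ×ℝ)) (0, 1) va := by
        simpa using HasDerivAt.prodMk (hasDerivAt_const va ya) (hasDerivAt_id va)
      have h1 : HasDerivAt (fun v => f i (a+1) ya v) (Df (0,1)) va :=
        hdiff.hasFDerivAt.comp_hasDerivAt va hcv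
      exact h1.unique (hfv i (a+1) le_rfl hab ya va)
    have hγ : HasDerivAt (fun ε => ((ya + ε, va - ε) : ℝ×ℝ)) (1, -1) 0 := by
      have := HasDerivAt.prodMk ((hasDerivAt_const (0:ℝ) ya).add (hasDerivAt_id 0))
        ((hasDerivAt_const (0:ℝ) va).sub (hasDerivAt_id 0))
      simpa using this
    have hF' : HasFDerivAt (fun p : ℝ×ℝ => f i (a+1) p.1 p.2) Df (ya+0, va-0) := by
      rw [show ((ya+0, va-0) : ℝ×ℝ) = (ya, va) by norm_num]
      exact hdiff.hasFDerivAt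
    have hcomp : HasDerivAt (fun ε => f i (a+1) (ya+ε) (va-ε)) (Df (1,-1)) 0 :=
      by have := hF'.comp_hasDerivAt 0 hγ; exact this
    have hval : Df (1, -1) = w i := by
      have : ((1, -1) : ℝ×ℝ) = (1, 0) - (0, 1) := by norm_num
      rw [this, map_sub, hDy, hDv, hw]
    rw [hval] at hcomp
    have := (hcomp.sub_const (f i (a+1) ya va)).const_add (F xE i)
    simpa [hΦ] using this
  have hΦder : HasDerivAt Φ w 0 := hasDerivAt_pi.2 hder
  set g : ℝ → ℝ := fun ε => H (Φ ε) with hg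
  have hgder : HasDerivAt g (D w) 0 := by
    have hH' : HasFDerivAt H (fderiv ℝ H (F xE)) (Φ 0) := by
      rw [hΦ0]; exact (hH.differentiable one_ne_zero (F xE)).hasFDerivAt
    exact hH'.comp_hasDerivAt 0 hΦder
  have hg0 : g 0 = L xE := by
    rw [hL]
    show H (Φ 0) = H (F xE)
    rw [hΦ0]
  have hgε : ∀ ε : ℝ, L (Function.update xE a (ya + ε)) = g ε := by
    intro ε
    rw [hL]
    congr 1
    funext i
    rw [hFup (ya+ε) i, show xE (a+1) - (ya+ε) = va - ε by rw [hva, hya]; ring]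
  have hupb : ∀ ε : ℝ, Function.update xE a (ya + ε) b = xb := by
    intro ε
    rw [Function.update_of_ne (by omega), hxEb]
  have hupd : ∀ δ > (0:ℝ), ∀ ε : ℝ, |ε| < δ → ∀ t : ℤ, a ≤ t → t ≤ b →
      |Function.update xE a (ya + ε) t - xE t| < δ := by
    intro δ hδ ε hε t hta htb
    by_cases ht : t = a
    · subst ht
      rw [Function.update_self, hya]
      simpa using hε
    · rw [Function.update_of_ne ht]
      simpa using hδ
  -- extremum gives D w = 0
  have hDw : D w = 0 := by
    rcases hext with ⟨δ, hδ, hmin⟩ | ⟨δ, hδ, hmax⟩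
    · have hloc : IsLocalMin g 0 := by
        have hball : Metric.ball (0:ℝ) δ ∈ nhds (0:ℝ) := Metric.ball_mem_nhds 0 hδ
        have : ∀ᶠ ε in nhds (0:ℝ), g 0 ≤ g ε := by
          filter_upwards [hball] with ε hε
          rw [Metric.mem_ball, Real.dist_eq, sub_zero] at hε
          rw [hg0, ← hgε]
          exact hmin _ (hupb ε) (hupd δ hδ ε hε)
        exact this
      exact hloc.hasDerivAt_eq_zero hgder
    · have hloc : IsLocalMax g 0 := by
        have hball : Metric.ball (0:ℝ) δ ∈ nhds (0:ℝ) := Metric.ball_mem_nhds 0 hδ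
        have : ∀ᶠ ε in nhds (0:ℝ), g ε ≤ g 0 := by
          filter_upwards [hball] with ε hε
          rw [Metric.mem_ball, Real.dist_eq, sub_zero] at hε
          rw [hg0, ← hgε]
          exact hmax _ (hupb ε) (hupd δ hδ ε hε)
        exact this
      exact hloc.hasDerivAt_eq_zero hgder
  -- conclude
  have hwsum : (w : Fin n → ℝ) = ∑ i, w i • (Pi.single i (1:ℝ) : Fin n → ℝ) := by
    funext j
    rw [Finset.sum_apply]
    simp [Pi.single_apply]
  have hDsum : D w = ∑ i, w i * D (Pi.single i 1) := by
    conv_lhs => rw [hwsum]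
    rw [map_sum]
    simp [smul_eq_mul]
  rw [show (∑ i, D (Pi.single i 1) * (fy i (a+1) ya va - fv i (a+1) ya va))
      = ∑ i, w i * D (Pi.single i 1) by
    apply Finset.sum_congr rfl; intro i _; rw [hw]; ring]
  rw [← hDsum, hDw]
end

section
/- There is no pair (Q₁, Q₂) ∈ ℝ² with Q₂ ≠ 0 satisfying the system 1 + Q₁²/(64 Q₂²) = Q₁ and 1/4 − Q₁/(32 Q₂) = Q₂. -/
/-- The system `1 + Q₁²/(64 Q₂²) = Q₁`, `1/4 - Q₁/(32 Q₂) = Q₂` has no real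
solution with `Q₂ ≠ 0`. -/
theorem product_example_discrete_system_no_solution :
    ¬ ∃ Q₁ Q₂ : ℝ, Q₂ ≠ 0 ∧
      1 + Q₁ ^ 2 / (64 * Q₂ ^ 2) = Q₁ ∧
      1 / 4 - Q₁ / (32 * Q₂) = Q₂ := by
  rintro ⟨Q₁, Q₂, hQ₂, h1, h2⟩
  have h2sq : Q₂ ^ 2 ≠ 0 := pow_ne_zero 2 hQ₂
  field_simp at h1 h2
  have hQ₁ : Q₁ = 8 * Q₂ - 32 * Q₂ ^ 2 := by nlinarith
  subst hQ₁
  have hpos : 0 < Q₂ ^ 2 := (sq_pos_of_ne_zero hQ₂)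
  nlinarith [sq_nonneg (6 * Q₂ - 1), mul_pos hpos hpos, sq_nonneg (Q₂ * (6 * Q₂ - 1))]
end
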